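/- arXiv:0711.1710 — 4 statements merged into one kernel-verified Lean document; each statement's English description precedes it below -/
import Mathlib

section
/- For every h > 0, the limit as (x,y) → (0,0) with 0 < x, y < h of the ratio p₂ʰ(1,y|x)/p₁(1,y|x) exists and equals ∑_{n∈ℤ} e^{−2h²n²}(1 − 4h²n²). -/
open MeasureTheory Filter Topology

/-- The one-dimensional heat kernel `p(t,y|x) = (2πt)^{-1/2} exp(-(y-x)²/(2t))`. -/
noncomputable def heatK (t y x : ℝ) : ℝ :=
  (2 * Real.pi * t) ^ (-(1 : ℝ) / 2) * Real.exp (-(y - x) ^ 2 / (2 * t))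

/-- Absorbing kernel with one wall at the origin. -/
noncomputable def pOne (t y x : ℝ) : ℝ := heatK t y x - heatK t y (-x)

/-- Absorbing kernel with two walls, at the origin and at `h`. -/
noncomputable def pTwo (h t y x : ℝ) : ℝ :=
  ∑' n : ℤ, (heatK t y (x + 2 * h * n) - heatK t y (-x + 2 * h * n))

namespace LRP

noncomputable def phiR (h ν : ℝ) (q : ℝ × ℝ) : ℝ :=
  Real.exp (2*h*ν*q.2 - 2*h^2*ν^2) *
    (Real.exp (q.1*(q.2 - 2*h*ν)) - Real.exp (-(q.1*(q.2 - 2*h*ν)))) /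
    (Real.exp (q.1*q.2) - Real.exp (-(q.1*q.2)))

noncomputable def repF (a x y : ℝ) : ℝ :=
  2*Real.exp (-a^2/2) * (Real.cosh (a*x) * Real.cosh (a*y) -
    (Real.sinh (a*x)/x) * (Real.sinh (a*y)/y) * ((x*y)/Real.sinh (x*y)) * Real.cosh (x*y))

lemma heat_term_eq (h x y ν : ℝ) :
    heatK 1 y (x + 2*h*ν) - heatK 1 y (-x + 2*h*ν)
      = ((2*Real.pi*1) ^ (-(1:ℝ)/2) * Real.exp (-x^2/2) * Real.exp (-y^2/2)) *
        (Real.exp (2*h*ν*y - 2*h^2*ν^2) *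
          (Real.exp (x*(y - 2*h*ν)) - Real.exp (-(x*(y - 2*h*ν))))) := by
  have e1 : -(y - (x + 2*h*ν))^2/(2*1)
      = -x^2/2 + -y^2/2 + ((2*h*ν*y - 2*h^2*ν^2) + x*(y - 2*h*ν)) := by ring
  have e2 : -(y - (-x + 2*h*ν))^2/(2*1)
      = -x^2/2 + -y^2/2 + ((2*h*ν*y - 2*h^2*ν^2) + -(x*(y - 2*h*ν))) := by ring
  simp only [heatK, e1, e2, Real.exp_add]
  ring

lemma pOne_eq (x y : ℝ) :
    pOne 1 y x = ((2*Real.pi*1) ^ (-(1:ℝ)/2) * Real.exp (-x^2/2) * Real.exp (-y^2/2)) *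
      (Real.exp (x*y) - Real.exp (-(x*y))) := by
  have e1 : -(y - x)^2/(2*1) = -x^2/2 + -y^2/2 + x*y := by ring
  have e2 : -(y - -x)^2/(2*1) = -x^2/2 + -y^2/2 + -(x*y) := by ring
  simp only [pOne, heatK, e1, e2, Real.exp_add]
  ring

lemma denom_pos {x y : ℝ} (hxy : 0 < x*y) :
    0 < Real.exp (x*y) - Real.exp (-(x*y)) := by
  have : -(x*y) < x*y := by linarith
  have := Real.exp_lt_exp.mpr this
  linarith

lemma ratio_eq (h : ℝ) (q : ℝ × ℝ) (hx : 0 < q.1) (hy : 0 < q.2) :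
    pTwo h 1 q.2 q.1 / pOne 1 q.2 q.1 = ∑' n : ℤ, phiR h n q := by
  have hxy : 0 < q.1 * q.2 := mul_pos hx hy
  have hK : (0:ℝ) < (2*Real.pi*1) ^ (-(1:ℝ)/2) * Real.exp (-q.1^2/2) * Real.exp (-q.2^2/2) := by
    have h2 : (0:ℝ) < 2*Real.pi*1 := by positivity
    positivity
  rw [pTwo, pOne_eq, ← tsum_div_const]
  refine tsum_congr fun n => ?_
  rw [heat_term_eq, mul_div_mul_left _ _ (ne_of_gt hK)]
  rfl

lemma phiR_zero (h : ℝ) (q : ℝ × ℝ) (hxy : 0 < q.1*q.2) : phiR h 0 q = 1 := by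
  have hD := denom_pos hxy
  simp only [phiR, mul_zero, zero_mul, mul_zero]
  norm_num
  exact ne_of_gt hD

lemma sum1 {b : ℝ} (hb : 0 < b) :
    Summable (fun k : ℕ => Real.exp (-(b*((k:ℝ)+1)^2))) := by
  have S : Summable (fun n : ℕ => Real.exp (-b*(n:ℝ))) := by
    simpa using Real.summable_pow_mul_exp_neg_nat_mul 0 hb
  refine Summable.of_nonneg_of_le (fun k => (Real.exp_pos _).le) (fun k => ?_) S
  refine Real.exp_le_exp.mpr ?_
  have hk : (0:ℝ) ≤ (k:ℝ) := Nat.cast_nonneg k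
  have h1 : (k:ℝ) ≤ ((k:ℝ)+1)^2 := by nlinarith
  nlinarith [mul_le_mul_of_nonneg_left h1 hb.le]

lemma sum2 {b : ℝ} (hb : 0 < b) :
    Summable (fun k : ℕ => ((k:ℝ)+1)^2 * Real.exp (-(b*((k:ℝ)+1)^2))) := by
  have S := Real.summable_pow_mul_exp_neg_nat_mul 2 hb
  have S' : Summable (fun k : ℕ => ((k:ℝ)+1)^2 * Real.exp (-b*((k:ℝ)+1))) := by
    have h2 := (summable_nat_add_iff 1).mpr S
    refine h2.congr fun k => ?_
    push_cast
    ring_nf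
  refine Summable.of_nonneg_of_le (fun k => by positivity) (fun k => ?_) S'
  have hk : (0:ℝ) ≤ (k:ℝ) := Nat.cast_nonneg k
  have h1 : ((k:ℝ)+1) ≤ ((k:ℝ)+1)^2 := by nlinarith
  have : -(b*((k:ℝ)+1)^2) ≤ -b*((k:ℝ)+1) := by nlinarith [mul_le_mul_of_nonneg_left h1 hb.le]
  exact mul_le_mul_of_nonneg_left (Real.exp_le_exp.mpr this) (by positivity)

lemma cosh_le_exp' {t : ℝ} (ht : 0 ≤ t) : Real.cosh t ≤ Real.exp t := by
  rw [Real.cosh_eq]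
  have := Real.exp_le_exp.mpr (neg_le_self ht)
  linarith

lemma sinh_le_mul_exp {t : ℝ} : Real.sinh t ≤ t * Real.exp t := by
  rw [Real.sinh_eq]
  have h1 : Real.exp (-t) = Real.exp t * Real.exp (-(2*t)) := by
    rw [← Real.exp_add]; ring_nf
  have h2 : -(2*t) + 1 ≤ Real.exp (-(2*t)) := Real.add_one_le_exp _
  have h3 : 0 < Real.exp t := Real.exp_pos t
  nlinarith [mul_nonneg h3.le (by linarith : (0:ℝ) ≤ Real.exp (-(2*t)) - (1 - 2*t))]

lemma phiR_abs_le (h : ℝ) (hh : 0 < h) (q : ℝ × ℝ) (hx : 0 < q.1) (hy : 0 < q.2) (ν : ℝ) :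
    |phiR h ν q| ≤ Real.exp ((2*h*(|ν|)*q.2 - 2*h^2*ν^2) + (q.1*q.2 + 2*h*(|ν|)*q.1)) /
      (Real.exp (q.1*q.2) - Real.exp (-(q.1*q.2))) := by
  have hxy : 0 < q.1*q.2 := mul_pos hx hy
  have hD := denom_pos hxy
  rw [phiR, abs_div, abs_of_pos hD, abs_mul, abs_of_pos (Real.exp_pos _)]
  rw [div_le_div_iff_of_pos_right hD]
  have l1 : -(|ν|) ≤ ν := neg_abs_le ν
  have l2 : ν ≤ (|ν|) := le_abs_self ν
  have h2h : (0:ℝ) ≤ 2*h := by positivity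
  have hg : Real.exp (2*h*ν*q.2 - 2*h^2*ν^2) ≤ Real.exp (2*h*(|ν|)*q.2 - 2*h^2*ν^2) := by
    refine Real.exp_le_exp.mpr ?_
    nlinarith [mul_le_mul_of_nonneg_left l2 h2h, hy.le]
  have hw : |q.1*(q.2 - 2*h*ν)| ≤ q.1*q.2 + 2*h*(|ν|)*q.1 := by
    rw [abs_mul, abs_of_pos hx]
    have habs : |q.2 - 2*h*ν| ≤ q.2 + 2*h*(|ν|) := by
      rw [abs_le]
      constructor
      · nlinarith [mul_le_mul_of_nonneg_left l2 h2h]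
      · nlinarith [mul_le_mul_of_nonneg_left l1 h2h]
    nlinarith
  have hu : |Real.exp (q.1*(q.2 - 2*h*ν)) - Real.exp (-(q.1*(q.2 - 2*h*ν)))|
      ≤ Real.exp (q.1*q.2 + 2*h*(|ν|)*q.1) := by
    have b1 : Real.exp (q.1*(q.2 - 2*h*ν)) ≤ Real.exp (q.1*q.2 + 2*h*(|ν|)*q.1) :=
      Real.exp_le_exp.mpr ((le_abs_self _).trans hw)
    have b2 : Real.exp (-(q.1*(q.2 - 2*h*ν))) ≤ Real.exp (q.1*q.2 + 2*h*(|ν|)*q.1) :=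
      Real.exp_le_exp.mpr ((neg_le_abs _).trans hw)
    have p1 := Real.exp_pos (q.1*(q.2 - 2*h*ν))
    have p2 := Real.exp_pos (-(q.1*(q.2 - 2*h*ν)))
    rw [abs_le]
    constructor <;> linarith
  calc Real.exp (2*h*ν*q.2 - 2*h^2*ν^2) * |Real.exp (q.1*(q.2 - 2*h*ν)) - Real.exp (-(q.1*(q.2 - 2*h*ν)))|
      ≤ Real.exp (2*h*(|ν|)*q.2 - 2*h^2*ν^2) * Real.exp (q.1*q.2 + 2*h*(|ν|)*q.1) :=
        mul_le_mul hg hu (abs_nonneg _) (Real.exp_pos _).le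
    _ = Real.exp ((2*h*(|ν|)*q.2 - 2*h^2*ν^2) + (q.1*q.2 + 2*h*(|ν|)*q.1)) := (Real.exp_add _ _).symm

lemma psi_eq_rep (h x y ν : ℝ) (hx : 0 < x) (hy : 0 < y) :
    phiR h ν (x,y) + phiR h (-ν) (x,y) = repF (2*h*ν) x y := by
  have hxy : 0 < x*y := mul_pos hx hy
  have hsinh : (0:ℝ) < Real.sinh (x*y) := Real.sinh_pos_iff.mpr hxy
  have hrep : repF (2*h*ν) x y =
      (2*Real.exp (-(2*h*ν)^2/2) * (Real.cosh ((2*h*ν)*x) * Real.cosh ((2*h*ν)*y) * Real.sinh (x*y)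
        - Real.sinh ((2*h*ν)*x) * Real.sinh ((2*h*ν)*y) * Real.cosh (x*y))) / Real.sinh (x*y) := by
    unfold repF
    field_simp
  have hDeq : Real.exp (x*y) - Real.exp (-(x*y)) = 2*Real.sinh (x*y) := by
    rw [Real.sinh_eq]; ring
  simp only [phiR]
  rw [hDeq, ← add_div, hrep, div_eq_div_iff (by positivity) hsinh.ne']
  have e1 : x*(y - 2*h*ν) = x*y - (2*h*ν)*x := by ring
  have e2 : x*(y - 2*h*(-ν)) = x*y + (2*h*ν)*x := by ring
  have e3 : 2*h*ν*y - 2*h^2*ν^2 = (2*h*ν)*y + -(2*h*ν)^2/2 := by ring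
  have e4 : 2*h*(-ν)*y - 2*h^2*(-ν)^2 = -((2*h*ν)*y) + -(2*h*ν)^2/2 := by ring
  rw [e1, e2, e3, e4, Real.cosh_eq, Real.cosh_eq, Real.cosh_eq, Real.sinh_eq, Real.sinh_eq,
    Real.sinh_eq]
  simp only [neg_add, neg_sub, neg_neg, Real.exp_add, Real.exp_sub, Real.exp_neg]
  field_simp
  ring

lemma repF_bound {a x y δ : ℝ} (ha : 0 < a) (hx : 0 < x) (hy : 0 < y)
    (hxd : x ≤ δ) (hyd : y ≤ δ) (hδ : δ ≤ 1) :
    |repF a x y| ≤ 2*(1+a^2)*(Real.exp (-a^2/2) * Real.exp (2*(a*δ)+1)) := by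
  have hxy : 0 < x*y := mul_pos hx hy
  have hsinh : (0:ℝ) < Real.sinh (x*y) := Real.sinh_pos_iff.mpr hxy
  have hax : (0:ℝ) < a*x := mul_pos ha hx
  have hay : (0:ℝ) < a*y := mul_pos ha hy
  have hX : Real.exp (a*x) ≤ Real.exp (a*δ) :=
    Real.exp_le_exp.mpr (by nlinarith)
  have hY : Real.exp (a*y) ≤ Real.exp (a*δ) :=
    Real.exp_le_exp.mpr (by nlinarith)
  have hcx : Real.cosh (a*x) ≤ Real.exp (a*δ) := (cosh_le_exp' hax.le).trans hX
  have hcy : Real.cosh (a*y) ≤ Real.exp (a*δ) := (cosh_le_exp' hay.le).trans hY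
  have hsx : Real.sinh (a*x)/x ≤ a * Real.exp (a*δ) := by
    rw [div_le_iff₀ hx]
    calc Real.sinh (a*x) ≤ (a*x) * Real.exp (a*x) := sinh_le_mul_exp
      _ ≤ (a*x) * Real.exp (a*δ) := by
          exact mul_le_mul_of_nonneg_left hX hax.le
      _ = a * Real.exp (a*δ) * x := by ring
  have hsy : Real.sinh (a*y)/y ≤ a * Real.exp (a*δ) := by
    rw [div_le_iff₀ hy]
    calc Real.sinh (a*y) ≤ (a*y) * Real.exp (a*y) := sinh_le_mul_exp
      _ ≤ (a*y) * Real.exp (a*δ) := by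
          exact mul_le_mul_of_nonneg_left hY hay.le
      _ = a * Real.exp (a*δ) * y := by ring
  have hq : x*y/Real.sinh (x*y) ≤ 1 := by
    rw [div_le_one hsinh]
    exact (Real.self_lt_sinh_iff.mpr hxy).le
  have hc3 : Real.cosh (x*y) ≤ Real.exp 1 := by
    refine (cosh_le_exp' hxy.le).trans (Real.exp_le_exp.mpr ?_)
    nlinarith
  have hP0 : (0:ℝ) ≤ Real.cosh (a*x) * Real.cosh (a*y) :=
    mul_nonneg (Real.cosh_pos _).le (Real.cosh_pos _).le
  have hsx0 : 0 ≤ Real.sinh (a*x)/x := div_nonneg (Real.sinh_pos_iff.mpr hax).le hx.le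
  have hsy0 : 0 ≤ Real.sinh (a*y)/y := div_nonneg (Real.sinh_pos_iff.mpr hay).le hy.le
  have hq0 : 0 ≤ x*y/Real.sinh (x*y) := div_nonneg hxy.le hsinh.le
  have hc30 : (0:ℝ) ≤ Real.cosh (x*y) := (Real.cosh_pos _).le
  have hXp : (0:ℝ) < Real.exp (a*δ) := Real.exp_pos _
  have hP : Real.cosh (a*x) * Real.cosh (a*y) ≤ Real.exp (a*δ) * Real.exp (a*δ) :=
    mul_le_mul hcx hcy (Real.cosh_pos _).le hXp.le
  have hQ : (Real.sinh (a*x)/x) * (Real.sinh (a*y)/y) * ((x*y)/Real.sinh (x*y)) * Real.cosh (x*y)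
      ≤ a^2 * (Real.exp (a*δ) * Real.exp (a*δ) * Real.exp 1) := by
    have b1 : (Real.sinh (a*x)/x) * (Real.sinh (a*y)/y)
        ≤ (a*Real.exp (a*δ)) * (a*Real.exp (a*δ)) :=
      mul_le_mul hsx hsy hsy0 (by positivity)
    have b2 : (Real.sinh (a*x)/x) * (Real.sinh (a*y)/y) * ((x*y)/Real.sinh (x*y))
        ≤ (a*Real.exp (a*δ)) * (a*Real.exp (a*δ)) * 1 :=
      mul_le_mul b1 hq hq0 (by positivity)
    calc (Real.sinh (a*x)/x) * (Real.sinh (a*y)/y) * ((x*y)/Real.sinh (x*y)) * Real.cosh (x*y)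
        ≤ ((a*Real.exp (a*δ)) * (a*Real.exp (a*δ)) * 1) * Real.exp 1 :=
          mul_le_mul b2 hc3 hc30 (by positivity)
      _ = a^2 * (Real.exp (a*δ) * Real.exp (a*δ) * Real.exp 1) := by ring
  have hQ0 : 0 ≤ (Real.sinh (a*x)/x) * (Real.sinh (a*y)/y) * ((x*y)/Real.sinh (x*y)) * Real.cosh (x*y) := by
    positivity
  have he1 : (1:ℝ) ≤ Real.exp 1 := by
    have := Real.add_one_le_exp (1:ℝ); linarith
  have habs : |Real.cosh (a*x) * Real.cosh (a*y) -
      (Real.sinh (a*x)/x) * (Real.sinh (a*y)/y) * ((x*y)/Real.sinh (x*y)) * Real.cosh (x*y)|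
      ≤ (1+a^2) * (Real.exp (a*δ) * Real.exp (a*δ) * Real.exp 1) := by
    rw [abs_le]
    constructor
    · nlinarith [mul_pos (mul_pos hXp hXp) (Real.exp_pos 1)]
    · nlinarith [mul_pos (mul_pos hXp hXp) (Real.exp_pos 1)]
  have hrw : |repF a x y| = 2*Real.exp (-a^2/2) * |Real.cosh (a*x) * Real.cosh (a*y) -
      (Real.sinh (a*x)/x) * (Real.sinh (a*y)/y) * ((x*y)/Real.sinh (x*y)) * Real.cosh (x*y)| := by
    rw [repF, abs_mul, abs_of_pos (by positivity : (0:ℝ) < 2*Real.exp (-a^2/2))]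
  rw [hrw]
  calc 2*Real.exp (-a^2/2) * |Real.cosh (a*x) * Real.cosh (a*y) -
      (Real.sinh (a*x)/x) * (Real.sinh (a*y)/y) * ((x*y)/Real.sinh (x*y)) * Real.cosh (x*y)|
      ≤ 2*Real.exp (-a^2/2) * ((1+a^2) * (Real.exp (a*δ) * Real.exp (a*δ) * Real.exp 1)) :=
        mul_le_mul_of_nonneg_left habs (by positivity)
    _ = 2*(1+a^2)*(Real.exp (-a^2/2) * Real.exp (2*(a*δ)+1)) := by
        rw [show Real.exp (a*δ) * Real.exp (a*δ) * Real.exp 1 = Real.exp (2*(a*δ)+1) by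
          rw [← Real.exp_add, ← Real.exp_add]; congr 1; ring]
        ring

lemma sinh_div_tendsto : Filter.Tendsto (fun t : ℝ => Real.sinh t / t) (𝓝[≠] (0:ℝ)) (𝓝 1) := by
  have h := hasDerivAt_iff_tendsto_slope.mp (Real.hasDerivAt_sinh 0)
  rw [Real.cosh_zero] at h
  refine h.congr fun t => ?_
  simp [slope_def_field, Real.sinh_zero]

lemma repF_tendsto {F : Filter (ℝ×ℝ)} (hle : F ≤ 𝓝 ((0:ℝ),(0:ℝ)))
    (hpos : ∀ᶠ q in F, 0 < q.1 ∧ 0 < q.2) (a : ℝ) (ha : 0 < a) :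
    Filter.Tendsto (fun q : ℝ×ℝ => repF a q.1 q.2) F (𝓝 (2*Real.exp (-a^2/2) * (1 - a^2))) := by
  have hfst : Filter.Tendsto (fun q : ℝ×ℝ => q.1) F (𝓝 0) := by
    have := (continuous_fst.tendsto ((0:ℝ),(0:ℝ))).mono_left hle
    simpa using this
  have hsnd : Filter.Tendsto (fun q : ℝ×ℝ => q.2) F (𝓝 0) := by
    have := (continuous_snd.tendsto ((0:ℝ),(0:ℝ))).mono_left hle
    simpa using this
  have hax : Filter.Tendsto (fun q : ℝ×ℝ => a*q.1) F (𝓝[≠] 0) := by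
    rw [tendsto_nhdsWithin_iff]
    refine ⟨by simpa using tendsto_const_nhds.mul hfst, ?_⟩
    filter_upwards [hpos] with q hq
    exact (mul_pos ha hq.1).ne'
  have hay : Filter.Tendsto (fun q : ℝ×ℝ => a*q.2) F (𝓝[≠] 0) := by
    rw [tendsto_nhdsWithin_iff]
    refine ⟨by simpa using tendsto_const_nhds.mul hsnd, ?_⟩
    filter_upwards [hpos] with q hq
    exact (mul_pos ha hq.2).ne'
  have hxy2 : Filter.Tendsto (fun q : ℝ×ℝ => q.1*q.2) F (𝓝[≠] 0) := by
    rw [tendsto_nhdsWithin_iff]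
    refine ⟨by simpa using hfst.mul hsnd, ?_⟩
    filter_upwards [hpos] with q hq
    exact (mul_pos hq.1 hq.2).ne'
  have T1 : Filter.Tendsto (fun q : ℝ×ℝ => Real.sinh (a*q.1)/(a*q.1)) F (𝓝 1) :=
    sinh_div_tendsto.comp hax
  have T2 : Filter.Tendsto (fun q : ℝ×ℝ => Real.sinh (a*q.2)/(a*q.2)) F (𝓝 1) :=
    sinh_div_tendsto.comp hay
  have T1' : Filter.Tendsto (fun q : ℝ×ℝ => Real.sinh (a*q.1)/q.1) F (𝓝 a) := by
    have h2 : Filter.Tendsto (fun q : ℝ×ℝ => a*(Real.sinh (a*q.1)/(a*q.1))) F (𝓝 (a*1)) :=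
      tendsto_const_nhds.mul T1
    rw [mul_one] at h2
    refine h2.congr' ?_
    filter_upwards [hpos] with q hq
    rw [← mul_div_assoc, mul_div_mul_left _ _ ha.ne']
  have T2' : Filter.Tendsto (fun q : ℝ×ℝ => Real.sinh (a*q.2)/q.2) F (𝓝 a) := by
    have h2 : Filter.Tendsto (fun q : ℝ×ℝ => a*(Real.sinh (a*q.2)/(a*q.2))) F (𝓝 (a*1)) :=
      tendsto_const_nhds.mul T2
    rw [mul_one] at h2
    refine h2.congr' ?_
    filter_upwards [hpos] with q hq
    rw [← mul_div_assoc, mul_div_mul_left _ _ ha.ne']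
  have T3 : Filter.Tendsto (fun q : ℝ×ℝ => (q.1*q.2)/Real.sinh (q.1*q.2)) F (𝓝 1) := by
    have Sinv := (sinh_div_tendsto.inv₀ one_ne_zero).comp hxy2
    simp only [Function.comp_def, inv_div, inv_one] at Sinv
    exact Sinv
  have hc1 : Filter.Tendsto (fun q : ℝ×ℝ => Real.cosh (a*q.1)) F (𝓝 1) := by
    have := (Real.continuous_cosh.tendsto 0).comp (hax.mono_right nhdsWithin_le_nhds)
    simpa [Function.comp_def] using this
  have hc2 : Filter.Tendsto (fun q : ℝ×ℝ => Real.cosh (a*q.2)) F (𝓝 1) := by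
    have := (Real.continuous_cosh.tendsto 0).comp (hay.mono_right nhdsWithin_le_nhds)
    simpa [Function.comp_def] using this
  have hc3 : Filter.Tendsto (fun q : ℝ×ℝ => Real.cosh (q.1*q.2)) F (𝓝 1) := by
    have := (Real.continuous_cosh.tendsto 0).comp (hxy2.mono_right nhdsWithin_le_nhds)
    simpa [Function.comp_def] using this
  have big := (tendsto_const_nhds (x := 2*Real.exp (-a^2/2)) (f := F)).mul
    ((hc1.mul hc2).sub ((((T1'.mul T2')).mul T3).mul hc3))
  simp only [repF]
  convert big using 2
  ring


end LRP

open LRP in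
/-- For every `h > 0`, the limit of `p₂ʰ(1,y|x)/p₁(1,y|x)` as `(x,y) → (0,0)`
with `0 < x < h`, `0 < y < h`, exists and equals
`∑_{n ∈ ℤ} e^{-2h²n²} (1 - 4h²n²)`. -/
theorem limit_ratio_pTwo_pOne (h : ℝ) (hh : 0 < h) :
    Tendsto (fun q : ℝ × ℝ => pTwo h 1 q.2 q.1 / pOne 1 q.2 q.1)
      (𝓝[{q : ℝ × ℝ | 0 < q.1 ∧ q.1 < h ∧ 0 < q.2 ∧ q.2 < h}] (0, 0))
      (𝓝 (∑' n : ℤ, Real.exp (-2 * h ^ 2 * (n : ℝ) ^ 2) * (1 - 4 * h ^ 2 * (n : ℝ) ^ 2))) := by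
  set S : Set (ℝ × ℝ) := {q : ℝ × ℝ | 0 < q.1 ∧ q.1 < h ∧ 0 < q.2 ∧ q.2 < h} with hSdef
  set F : Filter (ℝ × ℝ) := 𝓝[S] (0, 0) with hFdef
  have hF : F ≤ 𝓝 ((0:ℝ), (0:ℝ)) := nhdsWithin_le_nhds
  set δ : ℝ := min 1 (h/4) with hδdef
  have hδpos : 0 < δ := lt_min one_pos (by positivity)
  have hδ1 : δ ≤ 1 := min_le_left _ _
  have hδh : δ ≤ h/4 := min_le_right _ _
  -- eventual facts
  have hfst : Tendsto (fun q : ℝ×ℝ => q.1) F (𝓝 0) := by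
    have := (continuous_fst.tendsto ((0:ℝ),(0:ℝ))).mono_left hF
    simpa using this
  have hsnd : Tendsto (fun q : ℝ×ℝ => q.2) F (𝓝 0) := by
    have := (continuous_snd.tendsto ((0:ℝ),(0:ℝ))).mono_left hF
    simpa using this
  have hmem : ∀ᶠ q in F, q ∈ S := eventually_mem_nhdsWithin
  have hev : ∀ᶠ q in F, (0 < q.1 ∧ q.1 ≤ δ) ∧ (0 < q.2 ∧ q.2 ≤ δ) := by
    filter_upwards [hmem, hfst.eventually_lt_const hδpos, hsnd.eventually_lt_const hδpos]
      with q hq h1 h2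
    exact ⟨⟨hq.1, h1.le⟩, ⟨hq.2.2.1, h2.le⟩⟩
  have hpos : ∀ᶠ q in F, 0 < q.1 ∧ 0 < q.2 := by
    filter_upwards [hev] with q hq
    exact ⟨hq.1.1, hq.2.1⟩
  -- the paired summands and their limits
  set ψ : ℕ → (ℝ × ℝ) → ℝ :=
    fun k q => phiR h ((k:ℝ)+1) q + phiR h (-((k:ℝ)+1)) q with hψdef
  set ℓ : ℕ → ℝ :=
    fun k => 2*Real.exp (-(2*h*((k:ℝ)+1))^2/2) * (1 - (2*h*((k:ℝ)+1))^2) with hℓdef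
  have hb2 : (0:ℝ) < h^2 := by positivity
  -- dominated convergence for the tail sum
  have hDCT : Tendsto (fun q => ∑' k : ℕ, ψ k q) F (𝓝 (∑' k : ℕ, ℓ k)) := by
    refine tendsto_tsum_of_dominated_convergence
      (bound := fun k => 2*(1+(2*h*((k:ℝ)+1))^2)*
        (Real.exp (-(2*h*((k:ℝ)+1))^2/2) * Real.exp (2*((2*h*((k:ℝ)+1))*δ)+1))) ?_ ?_ ?_
    · -- summability of the bound
      have hs : Summable (fun k : ℕ => 2*Real.exp 1 *
          (Real.exp (-(h^2*((k:ℝ)+1)^2)) + 4*h^2*(((k:ℝ)+1)^2 * Real.exp (-(h^2*((k:ℝ)+1)^2))))) :=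
        (((sum1 hb2).add ((sum2 hb2).mul_left (4*h^2))).mul_left _)
      refine Summable.of_nonneg_of_le (fun k => by positivity) (fun k => ?_) hs
      have hm1 : (1:ℝ) ≤ (k:ℝ)+1 := by
        have : (0:ℝ) ≤ (k:ℝ) := Nat.cast_nonneg k
        linarith
      have hE : Real.exp (-(2*h*((k:ℝ)+1))^2/2) * Real.exp (2*((2*h*((k:ℝ)+1))*δ)+1)
          ≤ Real.exp 1 * Real.exp (-(h^2*((k:ℝ)+1)^2)) := by
        rw [← Real.exp_add, ← Real.exp_add]
        refine Real.exp_le_exp.mpr ?_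
        have c1 : (2*h*((k:ℝ)+1))*δ ≤ (2*h*((k:ℝ)+1))*(h/4) :=
          mul_le_mul_of_nonneg_left hδh (by positivity)
        have c2 : h^2*((k:ℝ)+1)*1 ≤ h^2*((k:ℝ)+1)*((k:ℝ)+1) :=
          mul_le_mul_of_nonneg_left hm1 (by positivity)
        nlinarith
      calc 2*(1+(2*h*((k:ℝ)+1))^2)*
            (Real.exp (-(2*h*((k:ℝ)+1))^2/2) * Real.exp (2*((2*h*((k:ℝ)+1))*δ)+1))
          ≤ 2*(1+(2*h*((k:ℝ)+1))^2)*(Real.exp 1 * Real.exp (-(h^2*((k:ℝ)+1)^2))) :=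
            mul_le_mul_of_nonneg_left hE (by positivity)
        _ = 2*Real.exp 1 *
            (Real.exp (-(h^2*((k:ℝ)+1)^2)) + 4*h^2*(((k:ℝ)+1)^2 * Real.exp (-(h^2*((k:ℝ)+1)^2)))) := by
            ring
    · -- pointwise limits
      intro k
      have ha : (0:ℝ) < 2*h*((k:ℝ)+1) := by positivity
      have hrt := repF_tendsto hF hpos (2*h*((k:ℝ)+1)) ha
      refine hrt.congr' ?_
      filter_upwards [hpos] with q hq
      exact (psi_eq_rep h q.1 q.2 ((k:ℝ)+1) hq.1 hq.2).symm
    · -- the uniform bound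
      filter_upwards [hev] with q hq k
      have ha : (0:ℝ) < 2*h*((k:ℝ)+1) := by positivity
      rw [Real.norm_eq_abs,
        show ψ k q = repF (2*h*((k:ℝ)+1)) q.1 q.2 from
          psi_eq_rep h q.1 q.2 ((k:ℝ)+1) hq.1.1 hq.2.1]
      exact repF_bound ha hq.1.1 hq.2.1 hq.1.2 hq.2.2 hδ1
  -- eventual identification of the ratio
  have heq : ∀ᶠ q in F, pTwo h 1 q.2 q.1 / pOne 1 q.2 q.1 = 1 + ∑' k : ℕ, ψ k q := by
    filter_upwards [hev] with q hq
    obtain ⟨⟨hx, hxd⟩, ⟨hy, hyd⟩⟩ := hq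
    have hxy : 0 < q.1*q.2 := mul_pos hx hy
    have hD := denom_pos hxy
    rw [ratio_eq h q hx hy]
    -- a summable bound at the point q
    have hBq : Summable (fun k : ℕ => Real.exp 1 * Real.exp (-(h^2*((k:ℝ)+1)^2)) /
        (Real.exp (q.1*q.2) - Real.exp (-(q.1*q.2)))) :=
      ((sum1 hb2).mul_left _).div_const _
    have hb : ∀ (k : ℕ) (ν : ℝ), |ν| = (k:ℝ)+1 →
        ‖phiR h ν q‖ ≤ Real.exp 1 * Real.exp (-(h^2*((k:ℝ)+1)^2)) /
          (Real.exp (q.1*q.2) - Real.exp (-(q.1*q.2))) := by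
      intro k ν hν
      rw [Real.norm_eq_abs]
      refine (phiR_abs_le h hh q hx hy ν).trans ?_
      rw [← Real.exp_add, div_le_div_iff_of_pos_right hD]
      refine Real.exp_le_exp.mpr ?_
      rw [hν, ← sq_abs ν, hν]
      have hm1 : (1:ℝ) ≤ (k:ℝ)+1 := by
        have : (0:ℝ) ≤ (k:ℝ) := Nat.cast_nonneg k
        linarith
      have c1 : 2*h*((k:ℝ)+1)*q.2 ≤ 2*h*((k:ℝ)+1)*δ :=
        mul_le_mul_of_nonneg_left hyd (by positivity)
      have c2 : 2*h*((k:ℝ)+1)*q.1 ≤ 2*h*((k:ℝ)+1)*δ :=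
        mul_le_mul_of_nonneg_left hxd (by positivity)
      have c3 : q.1*q.2 ≤ δ*δ := mul_le_mul hxd hyd hy.le hδpos.le
      have c4 : (2*h*((k:ℝ)+1))*δ ≤ (2*h*((k:ℝ)+1))*(h/4) :=
        mul_le_mul_of_nonneg_left hδh (by positivity)
      have c5 : h^2*((k:ℝ)+1)*1 ≤ h^2*((k:ℝ)+1)*((k:ℝ)+1) :=
        mul_le_mul_of_nonneg_left hm1 (by positivity)
      nlinarith
    have hs1R : Summable (fun k : ℕ => phiR h ((k:ℝ)+1) q) := by
      refine Summable.of_norm_bounded hBq fun k => hb k _ ?_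
      rw [abs_of_nonneg]
      positivity
    have hs2R : Summable (fun k : ℕ => phiR h (-((k:ℝ)+1)) q) := by
      refine Summable.of_norm_bounded hBq fun k => hb k _ ?_
      rw [abs_neg, abs_of_nonneg]
      positivity
    have hs1Z : Summable (fun k : ℕ => phiR h (((k:ℤ)+1 : ℤ) : ℝ) q) :=
      hs1R.congr fun k => by push_cast; ring_nf
    have hs2Z : Summable (fun k : ℕ => phiR h ((-((k:ℤ)+1) : ℤ) : ℝ) q) :=
      hs2R.congr fun k => by push_cast; ring_nf
    have hdecomp := tsum_of_add_one_of_neg_add_one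
      (f := fun n : ℤ => phiR h (n:ℝ) q) hs1Z hs2Z
    rw [hdecomp]
    have c1 : (∑' k : ℕ, phiR h (((k:ℤ)+1 : ℤ) : ℝ) q) = ∑' k : ℕ, phiR h ((k:ℝ)+1) q :=
      tsum_congr fun k => by push_cast; ring_nf
    have c2 : (∑' k : ℕ, phiR h ((-((k:ℤ)+1) : ℤ) : ℝ) q) = ∑' k : ℕ, phiR h (-((k:ℝ)+1)) q :=
      tsum_congr fun k => by push_cast; ring_nf
    have h0 : (fun n : ℤ => phiR h (n:ℝ) q) 0 = 1 := by
      show phiR h ((0:ℤ):ℝ) q = 1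
      rw [Int.cast_zero]
      exact phiR_zero h q hxy
    rw [c1, c2, show phiR h ((0:ℤ):ℝ) q = 1 from h0, hψdef]
    rw [Summable.tsum_add hs1R hs2R]
    ring
  -- identification of the limit value
  have hgs : Summable (fun k : ℕ => Real.exp (-(h^2*((k:ℝ)+1)^2)) +
      4*h^2*(((k:ℝ)+1)^2 * Real.exp (-(h^2*((k:ℝ)+1)^2)))) :=
    (sum1 hb2).add ((sum2 hb2).mul_left (4*h^2))
  have hgb : ∀ k : ℕ, ‖Real.exp (-2*h^2*((k:ℝ)+1)^2) * (1 - 4*h^2*((k:ℝ)+1)^2)‖ ≤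
      Real.exp (-(h^2*((k:ℝ)+1)^2)) + 4*h^2*(((k:ℝ)+1)^2 * Real.exp (-(h^2*((k:ℝ)+1)^2))) := by
    intro k
    rw [Real.norm_eq_abs, abs_mul, abs_of_pos (Real.exp_pos _)]
    have e1 : Real.exp (-2*h^2*((k:ℝ)+1)^2) ≤ Real.exp (-(h^2*((k:ℝ)+1)^2)) := by
      refine Real.exp_le_exp.mpr ?_
      nlinarith [sq_nonneg ((k:ℝ)+1)]
    have e2 : |1 - 4*h^2*((k:ℝ)+1)^2| ≤ 1 + 4*h^2*((k:ℝ)+1)^2 := by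
      rw [abs_le]
      constructor <;> nlinarith [sq_nonneg ((k:ℝ)+1)]
    calc Real.exp (-2*h^2*((k:ℝ)+1)^2) * |1 - 4*h^2*((k:ℝ)+1)^2|
        ≤ Real.exp (-(h^2*((k:ℝ)+1)^2)) * (1 + 4*h^2*((k:ℝ)+1)^2) :=
          mul_le_mul e1 e2 (abs_nonneg _) (Real.exp_pos _).le
      _ = Real.exp (-(h^2*((k:ℝ)+1)^2)) + 4*h^2*(((k:ℝ)+1)^2 * Real.exp (-(h^2*((k:ℝ)+1)^2))) := by
          ring
  have hgs1R : Summable (fun k : ℕ => Real.exp (-2*h^2*((k:ℝ)+1)^2) * (1 - 4*h^2*((k:ℝ)+1)^2)) :=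
    Summable.of_norm_bounded hgs hgb
  have hgs1Z : Summable (fun k : ℕ =>
      Real.exp (-2*h^2*((((k:ℤ)+1 : ℤ)):ℝ)^2) * (1 - 4*h^2*((((k:ℤ)+1 : ℤ)):ℝ)^2)) :=
    hgs1R.congr fun k => by push_cast; ring_nf
  have hgs2Z : Summable (fun k : ℕ =>
      Real.exp (-2*h^2*(((-((k:ℤ)+1) : ℤ)):ℝ)^2) * (1 - 4*h^2*(((-((k:ℤ)+1) : ℤ)):ℝ)^2)) :=
    hgs1R.congr fun k => by push_cast; ring_nf
  have hval : (∑' n : ℤ, Real.exp (-2 * h ^ 2 * (n : ℝ) ^ 2) * (1 - 4 * h ^ 2 * (n : ℝ) ^ 2))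
      = 1 + ∑' k : ℕ, ℓ k := by
    have hdecomp := tsum_of_add_one_of_neg_add_one
      (f := fun n : ℤ => Real.exp (-2 * h ^ 2 * (n : ℝ) ^ 2) * (1 - 4 * h ^ 2 * (n : ℝ) ^ 2))
      hgs1Z hgs2Z
    rw [hdecomp]
    have c1 : (∑' k : ℕ, Real.exp (-2*h^2*((((k:ℤ)+1 : ℤ)):ℝ)^2) * (1 - 4*h^2*((((k:ℤ)+1 : ℤ)):ℝ)^2))
        = ∑' k : ℕ, Real.exp (-2*h^2*((k:ℝ)+1)^2) * (1 - 4*h^2*((k:ℝ)+1)^2) :=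
      tsum_congr fun k => by push_cast; ring_nf
    have c2 : (∑' k : ℕ, Real.exp (-2*h^2*(((-((k:ℤ)+1) : ℤ)):ℝ)^2) * (1 - 4*h^2*(((-((k:ℤ)+1) : ℤ)):ℝ)^2))
        = ∑' k : ℕ, Real.exp (-2*h^2*((k:ℝ)+1)^2) * (1 - 4*h^2*((k:ℝ)+1)^2) :=
      tsum_congr fun k => by push_cast; ring_nf
    have c3 : (∑' k : ℕ, ℓ k) = ∑' k : ℕ,
        (Real.exp (-2*h^2*((k:ℝ)+1)^2) * (1 - 4*h^2*((k:ℝ)+1)^2) +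
         Real.exp (-2*h^2*((k:ℝ)+1)^2) * (1 - 4*h^2*((k:ℝ)+1)^2)) :=
      tsum_congr fun k => by rw [hℓdef]; ring_nf
    rw [c1, c2, c3, Summable.tsum_add hgs1R hgs1R]
    norm_num
    ring
  rw [hval]
  have final : Tendsto (fun q => 1 + ∑' k : ℕ, ψ k q) F (𝓝 (1 + ∑' k : ℕ, ℓ k)) :=
    tendsto_const_nhds.add hDCT
  exact Filter.Tendsto.congr' (Filter.EventuallyEq.symm heq) final
end

section
/- For every real s > 2, Z(8,0; 4+s/2) + 12 Z(6,2; 4+s/2) − 5 Z(4,4; 4+s/2) = (1/2) Z(0,0; s/2) + 4 Z(2,2; 2+s/2) − 16 Z(4,4; 4+s/2). -/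
/-- The double Dirichlet series
`Z(α,β;γ) = ∑_{(n₁,n₂)∈ℤ²∖{(0,0)}} n₁^α n₂^β / (n₁²+n₂²)^γ`. -/
noncomputable def Zdd (α β : ℕ) (γ : ℝ) : ℝ :=
  ∑' n : {p : ℤ × ℤ // p ≠ (0, 0)},
    ((n.1.1 : ℝ) ^ α * (n.1.2 : ℝ) ^ β) / ((n.1.1 : ℝ) ^ 2 + (n.1.2 : ℝ) ^ 2) ^ γ

/-- Summability of the terms of `Zdd` when `α + β + 2 < 2γ`. -/
lemma summable_Zdd (α β : ℕ) (γ : ℝ) (h : (α : ℝ) + β + 2 < 2 * γ) :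
    Summable fun n : {p : ℤ × ℤ // p ≠ (0, 0)} =>
      ((n.1.1 : ℝ) ^ α * (n.1.2 : ℝ) ^ β) / ((n.1.1 : ℝ) ^ 2 + (n.1.2 : ℝ) ^ 2) ^ γ := by
  have hγ : (0 : ℝ) ≤ γ := by
    nlinarith [show (0:ℝ) ≤ (α:ℝ) from Nat.cast_nonneg α,
      show (0:ℝ) ≤ (β:ℝ) from Nat.cast_nonneg β]
  have hk : 2 < 2 * γ - α - β := by linarith
  have h1 : Summable fun x : Fin 2 → ℤ => ‖x‖ ^ (-(2 * γ - α - β)) :=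
    EisensteinSeries.summable_one_div_norm_rpow hk
  have h2 : Summable fun p : ℤ × ℤ => ‖(finTwoArrowEquiv ℤ).symm p‖ ^ (-(2 * γ - α - β)) :=
    ((finTwoArrowEquiv ℤ).symm.summable_iff).mpr h1
  have h3 := h2.subtype {p : ℤ × ℤ | p ≠ (0, 0)}
  refine Summable.of_norm_bounded h3 ?_
  rintro ⟨⟨n₁, n₂⟩, hn⟩
  have hne : ¬(n₁ = 0 ∧ n₂ = 0) := by simpa [Prod.ext_iff] using hn
  have hNval : ‖(finTwoArrowEquiv ℤ).symm (n₁, n₂)‖ = ((max n₁.natAbs n₂.natAbs : ℕ) : ℝ) := by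
    rw [show (finTwoArrowEquiv ℤ).symm (n₁, n₂) = ![n₁, n₂] from rfl,
      EisensteinSeries.norm_eq_max_natAbs]
    simp
  set N : ℕ := max n₁.natAbs n₂.natAbs with hNdef
  have hN1 : 1 ≤ N := by
    rcases Classical.em (n₁ = 0) with h1' | h1'
    · have hn2 : n₂ ≠ 0 := fun hc => hne ⟨h1', hc⟩
      have := Int.natAbs_pos.mpr hn2; omega
    · have := Int.natAbs_pos.mpr h1'; omega
  have hN1R : (1 : ℝ) ≤ (N : ℝ) := by exact_mod_cast hN1
  have hNpos : (0 : ℝ) < (N : ℝ) := by linarith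
  have ha : |(n₁ : ℝ)| ≤ (N : ℝ) := by
    have : ((n₁.natAbs : ℕ) : ℝ) ≤ (N : ℝ) := by exact_mod_cast le_max_left _ _
    calc |(n₁ : ℝ)| = ((n₁.natAbs : ℕ) : ℝ) := by push_cast [Nat.cast_natAbs]; simp
      _ ≤ (N : ℝ) := this
  have hb : |(n₂ : ℝ)| ≤ (N : ℝ) := by
    have : ((n₂.natAbs : ℕ) : ℝ) ≤ (N : ℝ) := by exact_mod_cast le_max_right _ _
    calc |(n₂ : ℝ)| = ((n₂.natAbs : ℕ) : ℝ) := by push_cast [Nat.cast_natAbs]; simp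
      _ ≤ (N : ℝ) := this
  have hq : ((N : ℝ)) ^ (2 : ℕ) ≤ (n₁ : ℝ) ^ 2 + (n₂ : ℝ) ^ 2 := by
    have h1 : (n₁ : ℝ) ^ 2 = |(n₁ : ℝ)| ^ 2 := (sq_abs _).symm
    have h2 : (n₂ : ℝ) ^ 2 = |(n₂ : ℝ)| ^ 2 := (sq_abs _).symm
    rcases max_cases n₁.natAbs n₂.natAbs with ⟨hm, _⟩ | ⟨hm, _⟩
    · have : (N : ℝ) = |(n₁ : ℝ)| := by
        rw [hNdef, hm]; push_cast [Nat.cast_natAbs]; simp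
      nlinarith [sq_nonneg ((n₂ : ℝ))]
    · have : (N : ℝ) = |(n₂ : ℝ)| := by
        rw [hNdef, hm]; push_cast [Nat.cast_natAbs]; simp
      nlinarith [sq_nonneg ((n₁ : ℝ))]
  have hqpos : (0 : ℝ) < (n₁ : ℝ) ^ 2 + (n₂ : ℝ) ^ 2 := by
    have : (0:ℝ) < (N : ℝ) ^ (2:ℕ) := by positivity
    linarith
  -- bound the numerator
  have hnum : |(n₁ : ℝ) ^ α * (n₂ : ℝ) ^ β| ≤ (N : ℝ) ^ ((α : ℝ) + β) := by
    have h1 : |(n₁ : ℝ)| ^ α ≤ (N : ℝ) ^ α :=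
      pow_le_pow_left₀ (abs_nonneg _) ha α
    have h2 : |(n₂ : ℝ)| ^ β ≤ (N : ℝ) ^ β :=
      pow_le_pow_left₀ (abs_nonneg _) hb β
    calc |(n₁ : ℝ) ^ α * (n₂ : ℝ) ^ β| = |(n₁ : ℝ)| ^ α * |(n₂ : ℝ)| ^ β := by
          rw [abs_mul, abs_pow, abs_pow]
      _ ≤ (N : ℝ) ^ α * (N : ℝ) ^ β := by
          exact mul_le_mul h1 h2 (by positivity) (by positivity)
      _ = (N : ℝ) ^ ((α : ℝ) + β) := by
          rw [Real.rpow_add hNpos, Real.rpow_natCast, Real.rpow_natCast]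
  -- bound the denominator
  have hden : (N : ℝ) ^ (2 * γ) ≤ ((n₁ : ℝ) ^ 2 + (n₂ : ℝ) ^ 2) ^ γ := by
    have h0 := Real.rpow_le_rpow (by positivity) hq hγ
    rw [← Real.rpow_natCast ((N:ℝ)) 2, ← Real.rpow_mul (le_of_lt hNpos)] at h0
    have h2 : ((2:ℕ):ℝ) * γ = 2 * γ := by norm_num
    rwa [h2] at h0
  have hdenpos : (0 : ℝ) < (N : ℝ) ^ (2 * γ) := Real.rpow_pos_of_pos hNpos _
  show ‖(n₁ : ℝ) ^ α * (n₂ : ℝ) ^ β / ((n₁ : ℝ) ^ 2 + (n₂ : ℝ) ^ 2) ^ γ‖ ≤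
      ‖(finTwoArrowEquiv ℤ).symm (n₁, n₂)‖ ^ (-(2 * γ - α - β))
  rw [hNval]
  calc ‖(n₁ : ℝ) ^ α * (n₂ : ℝ) ^ β / ((n₁ : ℝ) ^ 2 + (n₂ : ℝ) ^ 2) ^ γ‖
      = |(n₁ : ℝ) ^ α * (n₂ : ℝ) ^ β| / ((n₁ : ℝ) ^ 2 + (n₂ : ℝ) ^ 2) ^ γ := by
        rw [Real.norm_eq_abs, abs_div, abs_of_pos (Real.rpow_pos_of_pos hqpos γ)]
    _ ≤ (N : ℝ) ^ ((α : ℝ) + β) / (N : ℝ) ^ (2 * γ) :=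
        div_le_div₀ (by positivity) hnum hdenpos hden
    _ = (N : ℝ) ^ (-(2 * γ - α - β)) := by
        rw [← Real.rpow_sub hNpos]; ring_nf

/-- The term function of `Zdd`. -/
noncomputable def Zt (α β : ℕ) (γ : ℝ) (n : {p : ℤ × ℤ // p ≠ (0, 0)}) : ℝ :=
  ((n.1.1 : ℝ) ^ α * (n.1.2 : ℝ) ^ β) / ((n.1.1 : ℝ) ^ 2 + (n.1.2 : ℝ) ^ 2) ^ γ

lemma Zdd_eq_tsum_Zt (α β : ℕ) (γ : ℝ) : Zdd α β γ = ∑' n, Zt α β γ n := rfl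

/-- Swapping the coordinates of a nonzero pair. -/
def swapE : {p : ℤ × ℤ // p ≠ (0, 0)} ≃ {p : ℤ × ℤ // p ≠ (0, 0)} where
  toFun n := ⟨(n.1.2, n.1.1), by
    obtain ⟨⟨a, b⟩, h⟩ := n
    simp only [ne_eq, Prod.ext_iff, not_and] at h ⊢
    tauto⟩
  invFun n := ⟨(n.1.2, n.1.1), by
    obtain ⟨⟨a, b⟩, h⟩ := n
    simp only [ne_eq, Prod.ext_iff, not_and] at h ⊢
    tauto⟩
  left_inv n := by obtain ⟨⟨a, b⟩, h⟩ := n; rfl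
  right_inv n := by obtain ⟨⟨a, b⟩, h⟩ := n; rfl

lemma Zdd_symm (α β : ℕ) (γ : ℝ) : Zdd α β γ = Zdd β α γ := by
  unfold Zdd
  rw [← swapE.tsum_eq (fun n : {p : ℤ × ℤ // p ≠ (0, 0)} =>
      ((n.1.1 : ℝ) ^ β * (n.1.2 : ℝ) ^ α) / ((n.1.1 : ℝ) ^ 2 + (n.1.2 : ℝ) ^ 2) ^ γ)]
  refine tsum_congr fun n => ?_
  obtain ⟨⟨a, b⟩, h⟩ := n
  show ((a : ℝ) ^ α * (b : ℝ) ^ β) / ((a : ℝ) ^ 2 + (b : ℝ) ^ 2) ^ γ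
      = ((b : ℝ) ^ β * (a : ℝ) ^ α) / ((b : ℝ) ^ 2 + (a : ℝ) ^ 2) ^ γ
  rw [add_comm ((b : ℝ) ^ 2), mul_comm]

/-- For every real `s > 2`,
`Z(8,0;4+s/2) + 12 Z(6,2;4+s/2) - 5 Z(4,4;4+s/2)
  = (1/2) Z(0,0;s/2) + 4 Z(2,2;2+s/2) - 16 Z(4,4;4+s/2)`. -/
theorem Zdd_reduction_deg8 (s : ℝ) (hs : 2 < s) :
    Zdd 8 0 (4 + s / 2) + 12 * Zdd 6 2 (4 + s / 2) - 5 * Zdd 4 4 (4 + s / 2)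
      = (1 / 2) * Zdd 0 0 (s / 2) + 4 * Zdd 2 2 (2 + s / 2) - 16 * Zdd 4 4 (4 + s / 2) := by
  have S80 := summable_Zdd 8 0 (4 + s / 2) (by push_cast; linarith)
  have S08 := summable_Zdd 0 8 (4 + s / 2) (by push_cast; linarith)
  have S62 := summable_Zdd 6 2 (4 + s / 2) (by push_cast; linarith)
  have S26 := summable_Zdd 2 6 (4 + s / 2) (by push_cast; linarith)
  have S44 := summable_Zdd 4 4 (4 + s / 2) (by push_cast; linarith)
  have S00 := summable_Zdd 0 0 (s / 2) (by push_cast; linarith)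
  have S22 := summable_Zdd 2 2 (2 + s / 2) (by push_cast; linarith)
  -- rephrase summability in terms of `Zt`
  have T80 : Summable (Zt 8 0 (4 + s / 2)) := S80
  have T08 : Summable (Zt 0 8 (4 + s / 2)) := S08
  have T62 : Summable (Zt 6 2 (4 + s / 2)) := S62
  have T26 : Summable (Zt 2 6 (4 + s / 2)) := S26
  have T44 : Summable (Zt 4 4 (4 + s / 2)) := S44
  have T00 : Summable (Zt 0 0 (s / 2)) := S00
  have T22 : Summable (Zt 2 2 (2 + s / 2)) := S22
  have hL : (∑' n, ((1/2) * Zt 8 0 (4 + s / 2) n + ((1/2) * Zt 0 8 (4 + s / 2) n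
        + (6 * Zt 6 2 (4 + s / 2) n + (6 * Zt 2 6 (4 + s / 2) n + 11 * Zt 4 4 (4 + s / 2) n)))))
      = (1/2) * Zdd 8 0 (4 + s / 2) + ((1/2) * Zdd 0 8 (4 + s / 2)
        + (6 * Zdd 6 2 (4 + s / 2) + (6 * Zdd 2 6 (4 + s / 2) + 11 * Zdd 4 4 (4 + s / 2)))) := by
    rw [Summable.tsum_add (T80.mul_left _) ((T08.mul_left _).add ((T62.mul_left _).add
        ((T26.mul_left _).add (T44.mul_left _)))),
      Summable.tsum_add (T08.mul_left _) ((T62.mul_left _).add ((T26.mul_left _).add (T44.mul_left _))),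
      Summable.tsum_add (T62.mul_left _) ((T26.mul_left _).add (T44.mul_left _)),
      Summable.tsum_add (T26.mul_left _) (T44.mul_left _),
      tsum_mul_left, tsum_mul_left, tsum_mul_left, tsum_mul_left, tsum_mul_left]
    rfl
  have hR : (∑' n, ((1/2) * Zt 0 0 (s / 2) n + 4 * Zt 2 2 (2 + s / 2) n))
      = (1/2) * Zdd 0 0 (s / 2) + 4 * Zdd 2 2 (2 + s / 2) := by
    rw [Summable.tsum_add (T00.mul_left _) (T22.mul_left _), tsum_mul_left, tsum_mul_left]
    rfl
  have hpt : ∀ n : {p : ℤ × ℤ // p ≠ (0, 0)},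
      (1/2) * Zt 8 0 (4 + s / 2) n + ((1/2) * Zt 0 8 (4 + s / 2) n
        + (6 * Zt 6 2 (4 + s / 2) n + (6 * Zt 2 6 (4 + s / 2) n + 11 * Zt 4 4 (4 + s / 2) n)))
      = (1/2) * Zt 0 0 (s / 2) n + 4 * Zt 2 2 (2 + s / 2) n := by
    rintro ⟨⟨n₁, n₂⟩, hn⟩
    have hne : ¬(n₁ = 0 ∧ n₂ = 0) := by simpa [Prod.ext_iff] using hn
    set x := (n₁ : ℝ) with hx
    set y := (n₂ : ℝ) with hy
    have hq : 0 < x ^ 2 + y ^ 2 := by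
      rcases Classical.em (n₁ = 0) with h1 | h1
      · have h2 : n₂ ≠ 0 := fun hc => hne ⟨h1, hc⟩
        have h3 : y ≠ 0 := Int.cast_ne_zero.mpr h2
        have h4 : 0 < y ^ 2 := lt_of_le_of_ne (sq_nonneg y) ((pow_ne_zero 2 h3).symm)
        nlinarith [sq_nonneg x]
      · have h3 : x ≠ 0 := Int.cast_ne_zero.mpr h1
        have h4 : 0 < x ^ 2 := lt_of_le_of_ne (sq_nonneg x) ((pow_ne_zero 2 h3).symm)
        nlinarith [sq_nonneg y]
    have e1 : (x ^ 2 + y ^ 2) ^ (4 + s / 2) = (x ^ 2 + y ^ 2) ^ (4 : ℕ) * (x ^ 2 + y ^ 2) ^ (s / 2) := by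
      rw [Real.rpow_add hq, ← Real.rpow_natCast (x ^ 2 + y ^ 2) 4]
      norm_num
    have e2 : (x ^ 2 + y ^ 2) ^ (2 + s / 2) = (x ^ 2 + y ^ 2) ^ (2 : ℕ) * (x ^ 2 + y ^ 2) ^ (s / 2) := by
      rw [Real.rpow_add hq, ← Real.rpow_natCast (x ^ 2 + y ^ 2) 2]
      norm_num
    have hqs : (x ^ 2 + y ^ 2) ^ (s / 2) ≠ 0 := ne_of_gt (Real.rpow_pos_of_pos hq _)
    have hq0 : x ^ 2 + y ^ 2 ≠ 0 := ne_of_gt hq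
    show (1/2) * (x ^ 8 * y ^ 0 / (x ^ 2 + y ^ 2) ^ (4 + s / 2))
        + ((1/2) * (x ^ 0 * y ^ 8 / (x ^ 2 + y ^ 2) ^ (4 + s / 2))
        + (6 * (x ^ 6 * y ^ 2 / (x ^ 2 + y ^ 2) ^ (4 + s / 2))
        + (6 * (x ^ 2 * y ^ 6 / (x ^ 2 + y ^ 2) ^ (4 + s / 2))
        + 11 * (x ^ 4 * y ^ 4 / (x ^ 2 + y ^ 2) ^ (4 + s / 2)))))
        = (1/2) * (x ^ 0 * y ^ 0 / (x ^ 2 + y ^ 2) ^ (s / 2))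
        + 4 * (x ^ 2 * y ^ 2 / (x ^ 2 + y ^ 2) ^ (2 + s / 2))
    rw [e1, e2]
    field_simp
    ring
  have hT := tsum_congr (L := SummationFilter.unconditional _) hpt
  rw [hT] at hL
  have hsym1 : Zdd 0 8 (4 + s / 2) = Zdd 8 0 (4 + s / 2) := Zdd_symm 0 8 _
  have hsym2 : Zdd 2 6 (4 + s / 2) = Zdd 6 2 (4 + s / 2) := Zdd_symm 2 6 _
  linarith [hL, hR]
end

section
/- Let b be a nonnegative integer and let a > 1 be real. Then Γ(a+2b) Z(2b, 2b; a+2b) = π^a ∫₀^∞ u^{a+2b−1} ( (θ^{(b)}(u))² − 𝟙{b=0} ) du, where θ^{(b)} denotes the b-th derivative of the Jacobi theta function θ, and 𝟙{b=0} equals 1 if b = 0 and 0 otherwise. -/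
open MeasureTheory

/-- The Jacobi theta function `θ(u) = ∑_{n∈ℤ} e^{-πn²u}`. -/
noncomputable def jTheta (u : ℝ) : ℝ := ∑' n : ℤ, Real.exp (-Real.pi * (n : ℝ) ^ 2 * u)

open Real Set

noncomputable def thTerm (b : ℕ) (n : ℤ) (u : ℝ) : ℝ :=
  (-Real.pi * (n : ℝ) ^ 2) ^ b * Real.exp (-Real.pi * (n : ℝ) ^ 2 * u)

lemma norm_thTerm (b : ℕ) (n : ℤ) (u : ℝ) :
    ‖thTerm b n u‖ = (Real.pi * (n : ℝ) ^ 2) ^ b * Real.exp (-Real.pi * (n : ℝ) ^ 2 * u) := by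
  have h : |(-Real.pi * (n : ℝ) ^ 2) ^ b| = (Real.pi * (n : ℝ) ^ 2) ^ b := by
    rw [abs_pow, neg_mul, abs_neg, abs_of_nonneg (by positivity)]
  rw [thTerm, Real.norm_eq_abs, abs_mul, h, abs_of_pos (Real.exp_pos _)]

lemma summable_pos_term (b : ℕ) {u : ℝ} (hu : 0 < u) :
    Summable fun n : ℤ => (Real.pi * (n : ℝ) ^ 2) ^ b * Real.exp (-Real.pi * (n : ℝ) ^ 2 * u) := by
  have hr : ‖Real.exp (-(Real.pi * u))‖ < 1 := by
    rw [Real.norm_eq_abs, abs_of_pos (Real.exp_pos _)]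
    exact Real.exp_lt_one_iff.mpr (neg_neg_iff_pos.mpr (by positivity))
  have hsum : Summable fun k : ℕ => Real.pi ^ b * ((k : ℝ) ^ (2 * b) * Real.exp (-(Real.pi * u)) ^ k) :=
    (summable_pow_mul_geometric_of_norm_lt_one (2 * b) hr).mul_left _
  have hZ : Summable fun n : ℤ => Real.pi ^ b * ((n.natAbs : ℝ) ^ (2 * b) * Real.exp (-(Real.pi * u)) ^ n.natAbs) := by
    apply Summable.of_nat_of_neg <;> simpa using hsum
  apply hZ.of_nonneg_of_le (fun n => by positivity)
  intro n
  have h1 : ((n : ℝ) ^ 2) = ((n.natAbs : ℝ)) ^ 2 := by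
    rw [Nat.cast_natAbs]; push_cast; rw [sq_abs]
  have h2 : Real.exp (-Real.pi * (n : ℝ) ^ 2 * u) ≤ Real.exp (-(Real.pi * u)) ^ n.natAbs := by
    rw [← Real.exp_nat_mul]
    apply Real.exp_le_exp.mpr
    have : (n.natAbs : ℝ) ≤ ((n.natAbs : ℝ)) ^ 2 := by
      exact_mod_cast Nat.le_self_pow two_ne_zero n.natAbs
    rw [h1]
    nlinarith [this, mul_pos Real.pi_pos hu,
      mul_nonneg (mul_pos Real.pi_pos hu).le (sub_nonneg.2 this)]
  calc (Real.pi * (n : ℝ) ^ 2) ^ b * Real.exp (-Real.pi * (n : ℝ) ^ 2 * u)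
      ≤ (Real.pi * (n : ℝ) ^ 2) ^ b * Real.exp (-(Real.pi * u)) ^ n.natAbs := by
        apply mul_le_mul_of_nonneg_left h2 (by positivity)
    _ = Real.pi ^ b * ((n.natAbs : ℝ) ^ (2 * b) * Real.exp (-(Real.pi * u)) ^ n.natAbs) := by
        rw [mul_pow, h1, ← pow_mul]; ring

lemma summable_norm_thTerm (b : ℕ) {u : ℝ} (hu : 0 < u) :
    Summable fun n : ℤ => ‖thTerm b n u‖ := by
  simpa only [norm_thTerm] using summable_pos_term b hu

lemma summable_thTerm (b : ℕ) {u : ℝ} (hu : 0 < u) :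
    Summable fun n : ℤ => thTerm b n u :=
  (summable_norm_thTerm b hu).of_norm

lemma hasDerivAt_thTerm (b : ℕ) (n : ℤ) (y : ℝ) :
    HasDerivAt (fun z => thTerm b n z) (thTerm (b + 1) n y) y := by
  have h : HasDerivAt (fun z : ℝ => Real.exp (-Real.pi * (n : ℝ) ^ 2 * z))
      (Real.exp (-Real.pi * (n : ℝ) ^ 2 * y) * (-Real.pi * (n : ℝ) ^ 2 * 1)) y :=
    ((hasDerivAt_id y).const_mul (-Real.pi * (n : ℝ) ^ 2)).exp
  have : HasDerivAt (fun z : ℝ => (-Real.pi * (n : ℝ) ^ 2) ^ b * Real.exp (-Real.pi * (n : ℝ) ^ 2 * z))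
      ((-Real.pi * (n : ℝ) ^ 2) ^ b * (Real.exp (-Real.pi * (n : ℝ) ^ 2 * y) * (-Real.pi * (n : ℝ) ^ 2 * 1))) y :=
    h.const_mul ((-Real.pi * (n : ℝ) ^ 2) ^ b)
  convert this using 1
  · simp only [thTerm]
  simp only [thTerm, pow_succ]
  ring

lemma iteratedDeriv_jTheta (b : ℕ) : ∀ u : ℝ, 0 < u →
    iteratedDeriv b jTheta u = ∑' n : ℤ, thTerm b n u := by
  induction b with
  | zero =>
    intro u hu
    simp only [iteratedDeriv_zero, jTheta, thTerm, pow_zero, one_mul]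
  | succ b ih =>
    intro u hu
    rw [iteratedDeriv_succ]
    have hev : iteratedDeriv b jTheta =ᶠ[nhds u] fun y => ∑' n : ℤ, thTerm b n y :=
      Filter.eventuallyEq_of_mem (Ioi_mem_nhds hu) (fun y hy => ih y hy)
    rw [hev.deriv_eq]
    have hu2 : (0 : ℝ) < u / 2 := by linarith
    have hd : HasDerivAt (fun z => ∑' n : ℤ, thTerm b n z) (∑' n : ℤ, thTerm (b + 1) n u) u := by
      apply hasDerivAt_tsum_of_isPreconnected (summable_pos_term (b + 1) hu2)
        isOpen_Ioi (isPreconnected_Ioi) (fun n y _ => hasDerivAt_thTerm b n y)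
        (fun n y hy => ?_) (mem_Ioi.mpr (by linarith : u / 2 < u))
        (summable_thTerm b hu) (mem_Ioi.mpr (by linarith : u / 2 < u))
      rw [norm_thTerm]
      apply mul_le_mul_of_nonneg_left _ (by positivity)
      apply Real.exp_le_exp.mpr
      have hy' : u / 2 ≤ y := le_of_lt hy
      nlinarith [mul_nonneg (mul_nonneg Real.pi_pos.le (sq_nonneg (n : ℝ))) (sub_nonneg.2 hy')]
    exact hd.deriv

lemma thTerm_zero (b : ℕ) (u : ℝ) : thTerm b 0 u = if b = 0 then 1 else 0 := by
  simp only [thTerm, Int.cast_zero]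
  rcases Nat.eq_zero_or_pos b with hb | hb
  · simp [hb]
  · rw [if_neg hb.ne']
    have : (-Real.pi * (0 : ℝ) ^ 2) = 0 := by ring
    rw [this, zero_pow hb.ne', zero_mul]

set_option maxHeartbeats 2000000 in
lemma sq_sub_ite (b : ℕ) {u : ℝ} (hu : 0 < u) :
    (∑' n : ℤ, thTerm b n u) ^ 2 - (if b = 0 then 1 else 0)
      = ∑' p : {p : ℤ × ℤ // p ≠ (0, 0)}, thTerm b p.1.1 u * thTerm b p.1.2 u := by
  set F : ℤ × ℤ → ℝ := fun p => thTerm b p.1 u * thTerm b p.2 u with hF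
  have hsum : Summable fun n : ℤ => ‖thTerm b n u‖ := summable_norm_thTerm b hu
  have hprod : (∑' n : ℤ, thTerm b n u) ^ 2 = ∑' p : ℤ × ℤ, F p := by
    rw [sq, tsum_mul_tsum_of_summable_norm hsum hsum]
  have hps : Summable F := summable_mul_of_summable_norm hsum hsum
  have hsplit := hps.tsum_subtype_add_tsum_subtype_compl ({((0 : ℤ), (0 : ℤ))} : Set (ℤ × ℤ))
  have h1 : (∑' p : ({((0 : ℤ), (0 : ℤ))} : Set (ℤ × ℤ)), F p) = if b = 0 then 1 else 0 := by
    rw [tsum_singleton ((0 : ℤ), (0 : ℤ)) F]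
    simp only [hF, thTerm_zero]
    rcases Nat.eq_zero_or_pos b with hb | hb
    · simp [hb]
    · simp [hb.ne']
  have h2 : (∑' p : ↑(({((0 : ℤ), (0 : ℤ))} : Set (ℤ × ℤ))ᶜ), F p)
      = ∑' p : {p : ℤ × ℤ // p ≠ (0, 0)}, F p :=
    (Equiv.subtypeEquivRight (fun p => by simp)).tsum_eq
      (fun p : {p : ℤ × ℤ // p ≠ (0, 0)} => F p)
  rw [hprod, ← hsplit, h1, h2]
  ring

lemma thmul (b : ℕ) (x y : ℤ) (u : ℝ) :
    thTerm b x u * thTerm b y u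
      = (Real.pi ^ 2 * (x : ℝ) ^ 2 * (y : ℝ) ^ 2) ^ b
          * Real.exp (-(Real.pi * ((x : ℝ) ^ 2 + (y : ℝ) ^ 2) * u)) := by
  have he : Real.exp (-Real.pi * (x : ℝ) ^ 2 * u) * Real.exp (-Real.pi * (y : ℝ) ^ 2 * u)
      = Real.exp (-(Real.pi * ((x : ℝ) ^ 2 + (y : ℝ) ^ 2) * u)) := by
    rw [← Real.exp_add]; congr 1; ring
  have hK : (-Real.pi * (x : ℝ) ^ 2) ^ b * (-Real.pi * (y : ℝ) ^ 2) ^ b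
      = (Real.pi ^ 2 * (x : ℝ) ^ 2 * (y : ℝ) ^ 2) ^ b := by
    rw [← mul_pow]; congr 1; ring
  calc thTerm b x u * thTerm b y u
      = ((-Real.pi * (x : ℝ) ^ 2) ^ b * (-Real.pi * (y : ℝ) ^ 2) ^ b)
          * (Real.exp (-Real.pi * (x : ℝ) ^ 2 * u) * Real.exp (-Real.pi * (y : ℝ) ^ 2 * u)) := by
        simp only [thTerm]; ring
    _ = _ := by rw [he, hK]

section pterm

variable {p : ℤ × ℤ} (hp : p ≠ (0, 0))

lemma one_le_m (hp : p ≠ (0, 0)) : (1 : ℝ) ≤ (p.1 : ℝ) ^ 2 + (p.2 : ℝ) ^ 2 := by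
  have h : p.1 ≠ 0 ∨ p.2 ≠ 0 := by
    by_contra h
    push_neg at h
    exact hp (Prod.ext h.1 h.2)
  rcases h with h | h
  · have h1 : (1 : ℝ) ≤ |(p.1 : ℝ)| := by
      rw [← Int.cast_abs]; exact_mod_cast Int.one_le_abs h
    nlinarith [sq_nonneg ((p.2 : ℝ)), sq_abs ((p.1 : ℝ))]
  · have h1 : (1 : ℝ) ≤ |(p.2 : ℝ)| := by
      rw [← Int.cast_abs]; exact_mod_cast Int.one_le_abs h
    nlinarith [sq_nonneg ((p.1 : ℝ)), sq_abs ((p.2 : ℝ))]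

lemma m_pos (hp : p ≠ (0, 0)) : (0 : ℝ) < (p.1 : ℝ) ^ 2 + (p.2 : ℝ) ^ 2 :=
  lt_of_lt_of_le one_pos (one_le_m hp)

lemma integral_g (b : ℕ) {s : ℝ} (hs : 0 < s) (hp : p ≠ (0, 0)) :
    ∫ u in Ioi (0 : ℝ), u ^ (s - 1) * (thTerm b p.1 u * thTerm b p.2 u)
      = (Real.pi ^ 2 * (p.1 : ℝ) ^ 2 * (p.2 : ℝ) ^ 2) ^ b
          * ((1 / (Real.pi * ((p.1 : ℝ) ^ 2 + (p.2 : ℝ) ^ 2))) ^ s * Real.Gamma s) := by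
  have hc : 0 < Real.pi * ((p.1 : ℝ) ^ 2 + (p.2 : ℝ) ^ 2) := mul_pos Real.pi_pos (m_pos hp)
  have hfe : (fun u : ℝ => u ^ (s - 1) * (thTerm b p.1 u * thTerm b p.2 u))
      = fun u : ℝ => (Real.pi ^ 2 * (p.1 : ℝ) ^ 2 * (p.2 : ℝ) ^ 2) ^ b
          * (u ^ (s - 1) * Real.exp (-(Real.pi * ((p.1 : ℝ) ^ 2 + (p.2 : ℝ) ^ 2) * u))) := by
    funext u
    rw [thmul b p.1 p.2]
    ring
  rw [hfe, MeasureTheory.integral_const_mul,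
    Real.integral_rpow_mul_exp_neg_mul_Ioi hs hc]

end pterm

section pterm2

variable {p : ℤ × ℤ}

lemma integrable_g (b : ℕ) {s : ℝ} (hs : 0 < s) (hp : p ≠ (0, 0)) :
    Integrable (fun u : ℝ => u ^ (s - 1) * (thTerm b p.1 u * thTerm b p.2 u))
      (volume.restrict (Ioi (0 : ℝ))) := by
  have hc : 0 < Real.pi * ((p.1 : ℝ) ^ 2 + (p.2 : ℝ) ^ 2) := mul_pos Real.pi_pos (m_pos hp)
  have hbase : IntegrableOn
      (fun u : ℝ => u ^ (s - 1) * Real.exp (-(Real.pi * ((p.1 : ℝ) ^ 2 + (p.2 : ℝ) ^ 2) * u)))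
      (Ioi (0 : ℝ)) := by
    have := integrableOn_rpow_mul_exp_neg_mul_rpow (by linarith : (-1 : ℝ) < s - 1) zero_lt_one hc
    simpa [Real.rpow_one, neg_mul] using this
  have hfe : (fun u : ℝ => u ^ (s - 1) * (thTerm b p.1 u * thTerm b p.2 u))
      = fun u : ℝ => (Real.pi ^ 2 * (p.1 : ℝ) ^ 2 * (p.2 : ℝ) ^ 2) ^ b
          * (u ^ (s - 1) * Real.exp (-(Real.pi * ((p.1 : ℝ) ^ 2 + (p.2 : ℝ) ^ 2) * u))) := by
    funext u
    rw [thmul b p.1 p.2]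
    ring
  rw [hfe]
  exact hbase.const_mul _

lemma g_nonneg (b : ℕ) (s : ℝ) {u : ℝ} (hu : u ∈ Ioi (0 : ℝ)) :
    0 ≤ u ^ (s - 1) * (thTerm b p.1 u * thTerm b p.2 u) := by
  rw [thmul b p.1 p.2]
  have hu' : (0 : ℝ) < u := hu
  positivity

lemma norm_integral_g (b : ℕ) {s : ℝ} (hs : 0 < s) (hp : p ≠ (0, 0)) :
    ∫ u in Ioi (0 : ℝ), ‖u ^ (s - 1) * (thTerm b p.1 u * thTerm b p.2 u)‖
      = (Real.pi ^ 2 * (p.1 : ℝ) ^ 2 * (p.2 : ℝ) ^ 2) ^ b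
          * ((1 / (Real.pi * ((p.1 : ℝ) ^ 2 + (p.2 : ℝ) ^ 2))) ^ s * Real.Gamma s) := by
  rw [← integral_g b hs hp]
  apply setIntegral_congr_fun measurableSet_Ioi
  intro u hu
  exact Real.norm_of_nonneg (g_nonneg b s hu)

end pterm2

lemma int_sq_cast (n : ℤ) : ((n : ℝ)) ^ 2 = ((n.natAbs : ℝ)) ^ 2 := by
  rw [Nat.cast_natAbs]; push_cast; rw [sq_abs]

lemma summable_V {a : ℝ} (ha : 1 < a) (b : ℕ) :
    Summable fun p : {p : ℤ × ℤ // p ≠ (0, 0)} =>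
      (Real.pi ^ 2 * (p.1.1 : ℝ) ^ 2 * (p.1.2 : ℝ) ^ 2) ^ b
        * ((1 / (Real.pi * ((p.1.1 : ℝ) ^ 2 + (p.1.2 : ℝ) ^ 2))) ^ (a + 2 * (b : ℝ))
            * Real.Gamma (a + 2 * (b : ℝ))) := by
  set s : ℝ := a + 2 * (b : ℝ) with hsdef
  have hb0 : (0 : ℝ) ≤ (b : ℝ) := b.cast_nonneg
  have hs0 : 0 < s := by rw [hsdef]; linarith
  have hΓ : 0 < Real.Gamma s := Real.Gamma_pos_of_pos hs0
  set C : ℝ := Real.pi ^ (2 * b) * ((1 / Real.pi) ^ s * Real.Gamma s) with hC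
  have hC0 : 0 ≤ C := by
    rw [hC]
    have h1 : (0:ℝ) ≤ (1 / Real.pi) ^ s := Real.rpow_nonneg (by positivity) _
    positivity
  have h1 : Summable fun q : ℤ × ℤ => ‖(![q.1, q.2] : Fin 2 → ℤ)‖ ^ (-(2 * a)) := by
    have h0 : Summable fun x : Fin 2 → ℤ => ‖x‖ ^ (-(2 * a)) :=
      EisensteinSeries.summable_one_div_norm_rpow (by linarith)
    have := ((finTwoArrowEquiv ℤ).symm.summable_iff
      (f := fun x : Fin 2 → ℤ => ‖x‖ ^ (-(2 * a)))).mpr h0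
    simpa [finTwoArrowEquiv_symm_apply, Function.comp_def] using this
  have h2 := (h1.subtype {p : ℤ × ℤ | p ≠ (0, 0)}).mul_left C
  apply Summable.of_norm_bounded h2
  rintro ⟨⟨x, y⟩, hp⟩
  simp only [Function.comp_apply, Real.norm_eq_abs]
  set m : ℝ := (x : ℝ) ^ 2 + (y : ℝ) ^ 2 with hm
  have hm1 : (1 : ℝ) ≤ m := one_le_m hp
  have hm0 : (0 : ℝ) < m := m_pos hp
  set v : Fin 2 → ℤ := ![x, y] with hv
  have hnormv : ‖v‖ = ((max x.natAbs y.natAbs : ℕ) : ℝ) := by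
    rw [EisensteinSeries.norm_eq_max_natAbs]
    simp [hv, Nat.cast_max]
  have hN : 1 ≤ max x.natAbs y.natAbs := by
    rcases Nat.eq_zero_or_pos (max x.natAbs y.natAbs) with h0 | h
    · exfalso
      apply hp
      rw [Nat.max_eq_zero_iff] at h0
      exact Prod.ext (Int.natAbs_eq_zero.mp h0.1) (Int.natAbs_eq_zero.mp h0.2)
    · exact h
  have hv1 : (1 : ℝ) ≤ ‖v‖ := by rw [hnormv]; exact_mod_cast hN
  have hv0 : (0 : ℝ) < ‖v‖ ^ 2 := by nlinarith
  have hvm : ‖v‖ ^ 2 ≤ m := by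
    have hnat : (max x.natAbs y.natAbs) ^ 2 ≤ x.natAbs ^ 2 + y.natAbs ^ 2 := by
      rcases max_cases x.natAbs y.natAbs with ⟨h, _⟩ | ⟨h, _⟩ <;> rw [h]
      · exact Nat.le_add_right _ _
      · exact Nat.le_add_left _ _
    rw [hnormv, hm, int_sq_cast x, int_sq_cast y]
    exact_mod_cast hnat
  -- the key chain of inequalities
  have hx2 : (x : ℝ) ^ 2 ≤ m := by nlinarith [sq_nonneg (y : ℝ)]
  have hy2 : (y : ℝ) ^ 2 ≤ m := by nlinarith [sq_nonneg (x : ℝ)]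
  have hrw : ((Real.pi ^ 2 * m ^ 2) ^ b) * ((1 / (Real.pi * m)) ^ s * Real.Gamma s)
      = C * m ^ (-a) := by
    have e1 : (Real.pi ^ 2 * m ^ 2 : ℝ) ^ b = Real.pi ^ (2 * b) * m ^ (2 * b) := by
      rw [mul_pow, ← pow_mul, ← pow_mul]
    have e2 : (1 / (Real.pi * m)) ^ s = (1 / Real.pi) ^ s * m ^ (-s) := by
      rw [show (1 : ℝ) / (Real.pi * m) = (1 / Real.pi) * (1 / m) by
            field_simp,
        Real.mul_rpow (by positivity) (by positivity), one_div m,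
        Real.inv_rpow hm0.le, ← Real.rpow_neg hm0.le]
    have e3 : (m : ℝ) ^ (2 * b) * m ^ (-s) = m ^ (-a) := by
      rw [← Real.rpow_natCast m (2 * b), ← Real.rpow_add hm0]
      congr 1
      push_cast [hsdef]
      ring
    rw [e1, e2]
    calc Real.pi ^ (2 * b) * m ^ (2 * b) * ((1 / Real.pi) ^ s * m ^ (-s) * Real.Gamma s)
        = (Real.pi ^ (2 * b) * ((1 / Real.pi) ^ s * Real.Gamma s)) * (m ^ (2 * b) * m ^ (-s)) := by
          ring
      _ = C * m ^ (-a) := by rw [e3, hC]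
  have hmono : (Real.pi ^ 2 * (x : ℝ) ^ 2 * (y : ℝ) ^ 2) ^ b
        * ((1 / (Real.pi * m)) ^ s * Real.Gamma s)
      ≤ ((Real.pi ^ 2 * m ^ 2) ^ b) * ((1 / (Real.pi * m)) ^ s * Real.Gamma s) := by
    apply mul_le_mul_of_nonneg_right _ ?_
    · apply pow_le_pow_left₀ (by positivity)
      nlinarith [sq_nonneg (x : ℝ), sq_nonneg (y : ℝ), sq_nonneg Real.pi,
        mul_le_mul hx2 hy2 (sq_nonneg (y : ℝ)) hm0.le]
    · have : (0:ℝ) ≤ (1 / (Real.pi * m)) ^ s := Real.rpow_nonneg (by positivity) _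
      positivity
  have hlast : m ^ (-a) ≤ ‖v‖ ^ (-(2 * a)) := by
    have hexp : ‖v‖ ^ (-(2 * a)) = (‖v‖ ^ 2) ^ (-a) := by
      rw [← Real.rpow_natCast_mul (norm_nonneg v) 2 (-a)]
      congr 1
      push_cast
      ring
    rw [hexp]
    exact Real.rpow_le_rpow_of_nonpos hv0 hvm (by linarith)
  have hnn : (0:ℝ) ≤ (Real.pi ^ 2 * (x : ℝ) ^ 2 * (y : ℝ) ^ 2) ^ b
      * ((1 / (Real.pi * m)) ^ s * Real.Gamma s) := by
    have : (0:ℝ) ≤ (1 / (Real.pi * m)) ^ s := Real.rpow_nonneg (by positivity) _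
    positivity
  rw [abs_of_nonneg hnn]
  calc (Real.pi ^ 2 * (x : ℝ) ^ 2 * (y : ℝ) ^ 2) ^ b * ((1 / (Real.pi * m)) ^ s * Real.Gamma s)
      ≤ C * m ^ (-a) := hrw ▸ hmono
    _ ≤ C * ‖v‖ ^ (-(2 * a)) := mul_le_mul_of_nonneg_left hlast hC0

/-- For a nonnegative integer `b` and real `a > 1`,
`Γ(a+2b) Z(2b,2b;a+2b) = π^a ∫₀^∞ u^{a+2b-1} ((θ^{(b)}(u))² - 𝟙{b=0}) du`. -/
theorem Ztil_eq_theta_integral (b : ℕ) (a : ℝ) (ha : 1 < a) :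
    Real.Gamma (a + 2 * b) * Zdd (2 * b) (2 * b) (a + 2 * b)
      = Real.pi ^ a *
        ∫ u in Set.Ioi (0 : ℝ),
          u ^ (a + 2 * (b : ℝ) - 1) *
            ((iteratedDeriv b jTheta u) ^ 2 - if b = 0 then 1 else 0) := by
  set s : ℝ := a + 2 * (b : ℝ) with hsdef
  have hb0 : (0 : ℝ) ≤ (b : ℝ) := b.cast_nonneg
  have hs0 : 0 < s := by rw [hsdef]; linarith
  have hint : (∫ u in Ioi (0 : ℝ),
        u ^ (s - 1) * ((iteratedDeriv b jTheta u) ^ 2 - if b = 0 then 1 else 0))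
      = ∫ u in Ioi (0 : ℝ), ∑' p : {p : ℤ × ℤ // p ≠ (0, 0)},
          u ^ (s - 1) * (thTerm b p.1.1 u * thTerm b p.1.2 u) := by
    apply setIntegral_congr_fun measurableSet_Ioi
    intro u hu
    dsimp only
    rw [iteratedDeriv_jTheta b u hu, sq_sub_ite b hu, ← tsum_mul_left]
  have hswap : (∑' p : {p : ℤ × ℤ // p ≠ (0, 0)},
        ∫ u in Ioi (0 : ℝ), u ^ (s - 1) * (thTerm b p.1.1 u * thTerm b p.1.2 u))
      = ∫ u in Ioi (0 : ℝ), ∑' p : {p : ℤ × ℤ // p ≠ (0, 0)},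
          u ^ (s - 1) * (thTerm b p.1.1 u * thTerm b p.1.2 u) := by
    apply integral_tsum_of_summable_integral_norm
    · intro p
      exact integrable_g b hs0 p.2
    · have he : (fun p : {p : ℤ × ℤ // p ≠ (0, 0)} =>
          ∫ u in Ioi (0 : ℝ), ‖u ^ (s - 1) * (thTerm b p.1.1 u * thTerm b p.1.2 u)‖)
          = fun p : {p : ℤ × ℤ // p ≠ (0, 0)} =>
            (Real.pi ^ 2 * (p.1.1 : ℝ) ^ 2 * (p.1.2 : ℝ) ^ 2) ^ b
              * ((1 / (Real.pi * ((p.1.1 : ℝ) ^ 2 + (p.1.2 : ℝ) ^ 2))) ^ s * Real.Gamma s) :=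
        funext fun p => norm_integral_g b hs0 p.2
      rw [he]
      exact summable_V ha b
  rw [hint, ← hswap, Zdd, ← tsum_mul_left, ← tsum_mul_left]
  apply tsum_congr
  intro p
  rw [integral_g b hs0 p.2]
  set x : ℝ := (p.1.1 : ℝ)
  set y : ℝ := (p.1.2 : ℝ)
  set m : ℝ := x ^ 2 + y ^ 2 with hm
  have hm0 : (0 : ℝ) < m := m_pos p.2
  have e1 : (Real.pi ^ 2 * x ^ 2 * y ^ 2) ^ b
      = Real.pi ^ (2 * b) * (x ^ (2 * b) * y ^ (2 * b)) := by
    rw [mul_pow, mul_pow, ← pow_mul, ← pow_mul, ← pow_mul]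
    ring
  have e2 : (1 / (Real.pi * m)) ^ s = Real.pi ^ (-s) * m ^ (-s) := by
    rw [show (1 : ℝ) / (Real.pi * m) = Real.pi⁻¹ * m⁻¹ by
          rw [one_div, mul_inv],
      Real.mul_rpow (by positivity) (by positivity),
      Real.inv_rpow Real.pi_pos.le, Real.inv_rpow hm0.le,
      ← Real.rpow_neg Real.pi_pos.le, ← Real.rpow_neg hm0.le]
  have e3 : Real.pi ^ a * (Real.pi ^ (2 * b) * Real.pi ^ (-s)) = 1 := by
    rw [← Real.rpow_natCast Real.pi (2 * b), ← Real.rpow_add Real.pi_pos,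
      ← Real.rpow_add Real.pi_pos]
    rw [show a + (((2 * b : ℕ) : ℝ) + -s) = 0 by push_cast [hsdef]; ring]
    exact Real.rpow_zero _
  rw [e1, e2, div_eq_mul_inv, ← Real.rpow_neg hm0.le]
  calc Real.Gamma s * (x ^ (2 * b) * y ^ (2 * b) * m ^ (-s))
      = (Real.pi ^ a * (Real.pi ^ (2 * b) * Real.pi ^ (-s)))
          * (Real.Gamma s * (x ^ (2 * b) * y ^ (2 * b) * m ^ (-s))) := by
        rw [e3, one_mul]
    _ = Real.pi ^ a * (Real.pi ^ (2 * b) * (x ^ (2 * b) * y ^ (2 * b))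
          * (Real.pi ^ (-s) * m ^ (-s) * Real.Gamma s)) := by ring
end

section
/- For every real s > 2, ∫₀^∞ u^{s/2+1} θ'(u)² du = 1/(2(s−2)) + ∫₁^∞ u^{s/2+1} θ'(u)² du + ∫₁^∞ u^{−s/2+1} θ(u) θ'(u) du + ∫₁^∞ u^{−s/2+2} θ'(u)² du + (1/4) ∫₁^∞ u^{−s/2} (θ(u)² − 1) du. -/
open MeasureTheory
open Complex Set Filter
open scoped Real

noncomputable def jThetaD (u : ℝ) : ℝ :=
  ∑' n : ℤ, -Real.pi * (n : ℝ) ^ 2 * Real.exp (-Real.pi * (n : ℝ) ^ 2 * u)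

lemma summable_jTheta {u : ℝ} (hu : 0 < u) :
    Summable (fun n : ℤ => Real.exp (-Real.pi * (n : ℝ) ^ 2 * u)) := by
  have h := summable_pow_mul_jacobiTheta₂_term_bound 0 hu 0
  refine h.congr fun n => ?_
  simp only [pow_zero, one_mul, mul_zero, zero_mul, sub_zero]
  ring_nf

lemma summable_sq_jTheta {u : ℝ} (hu : 0 < u) :
    Summable (fun n : ℤ => (n : ℝ) ^ 2 * Real.exp (-Real.pi * (n : ℝ) ^ 2 * u)) := by
  have h := summable_pow_mul_jacobiTheta₂_term_bound 0 hu 2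
  refine h.congr fun n => ?_
  simp only [mul_zero, zero_mul, sub_zero]
  rw [Int.cast_abs, _root_.sq_abs]
  ring_nf

lemma hasSum_jTheta {u : ℝ} (hu : 0 < u) :
    HasSum (fun n : ℤ => Real.exp (-Real.pi * (n : ℝ) ^ 2 * u)) (jTheta u) :=
  (summable_jTheta hu).hasSum

lemma summable_jThetaD {u : ℝ} (hu : 0 < u) :
    Summable (fun n : ℤ => -Real.pi * (n : ℝ) ^ 2 * Real.exp (-Real.pi * (n : ℝ) ^ 2 * u)) := by
  have := ((summable_sq_jTheta hu).mul_left (-Real.pi))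
  refine this.congr fun n => by ring

lemma hasSum_jThetaD {u : ℝ} (hu : 0 < u) :
    HasSum (fun n : ℤ => -Real.pi * (n : ℝ) ^ 2 * Real.exp (-Real.pi * (n : ℝ) ^ 2 * u))
      (jThetaD u) :=
  (summable_jThetaD hu).hasSum

lemma im_mul_I {u : ℝ} : ((u : ℂ) * I).im = u := by simp

lemma term_eq (n : ℤ) {u : ℝ} :
    jacobiTheta₂_term n 0 ((u : ℂ) * I) = ((Real.exp (-Real.pi * (n : ℝ) ^ 2 * u) : ℝ) : ℂ) := by
  rw [jacobiTheta₂_term, Complex.ofReal_exp]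
  congr 1
  push_cast
  ring_nf
  rw [Complex.I_sq]
  ring

lemma jTheta_ofReal {u : ℝ} (hu : 0 < u) :
    ((jTheta u : ℝ) : ℂ) = jacobiTheta₂ 0 ((u : ℂ) * I) := by
  have h1 := Complex.hasSum_ofReal.mpr (hasSum_jTheta hu)
  simp only [← term_eq] at h1
  exact h1.unique (hasSum_jacobiTheta₂_term 0 (by simpa using hu))

lemma fderiv_term_eq (n : ℤ) {u : ℝ} :
    (jacobiTheta₂_term_fderiv n 0 ((u : ℂ) * I)) (0, I)
      = ((-Real.pi * (n : ℝ) ^ 2 * Real.exp (-Real.pi * (n : ℝ) ^ 2 * u) : ℝ) : ℂ) := by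
  rw [jacobiTheta₂_term_fderiv]
  simp only [ContinuousLinearMap.smul_apply, ContinuousLinearMap.add_apply,
    ContinuousLinearMap.coe_smul', Pi.smul_apply, ContinuousLinearMap.coe_fst',
    ContinuousLinearMap.coe_snd', smul_eq_mul, mul_zero, zero_add]
  rw [show ((π:ℂ) * I * (n:ℂ) ^ 2 * ((u:ℂ)*I)) = ((-Real.pi * (n : ℝ) ^ 2 * u : ℝ) : ℂ) by
    push_cast; ring_nf; rw [Complex.I_sq]; ring]
  rw [← Complex.ofReal_exp]
  push_cast
  ring_nf
  rw [Complex.I_sq]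
  ring

lemma jThetaD_ofReal {u : ℝ} (hu : 0 < u) :
    ((jThetaD u : ℝ) : ℂ) = (jacobiTheta₂_fderiv 0 ((u : ℂ) * I)) (0, I) := by
  let eval_CLM : (ℂ × ℂ →L[ℂ] ℂ) →L[ℂ] ℂ :=
  { toFun := fun f => f (0, I)
    cont := continuous_id'.clm_apply continuous_const
    map_add' := by simp only [ContinuousLinearMap.add_apply, forall_const]
    map_smul' := by simp only [ContinuousLinearMap.coe_smul', Pi.smul_apply, smul_eq_mul,
      RingHom.id_apply, forall_const] }
  have h2 : HasSum (fun n : ℤ => (jacobiTheta₂_term_fderiv n 0 ((u:ℂ)*I)) (0, I))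
      ((jacobiTheta₂_fderiv 0 ((u : ℂ) * I)) (0, I)) := by
    apply eval_CLM.hasSum (hasSum_jacobiTheta₂_term_fderiv 0 (by simpa using hu))
  have h1 := Complex.hasSum_ofReal.mpr (hasSum_jThetaD hu)
  simp only [← fderiv_term_eq] at h1
  exact h1.unique h2

lemma hasDerivAt_jacobiTheta₂_snd (z : ℂ) {τ : ℂ} (hτ : 0 < Complex.im τ) :
    HasDerivAt (fun w => jacobiTheta₂ z w) ((jacobiTheta₂_fderiv z τ) (0, 1)) τ := by
  exact ((hasFDerivAt_jacobiTheta₂ z hτ).comp τ (hasFDerivAt_prodMk_right z τ)).hasDerivAt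

lemma hasDerivAt_jTheta {u : ℝ} (hu : 0 < u) : HasDerivAt jTheta (jThetaD u) u := by
  have hτ : 0 < ((u : ℂ) * I).im := by simpa using hu
  have hC := hasDerivAt_jacobiTheta₂_snd 0 hτ
  have hm : HasDerivAt (fun w : ℂ => jacobiTheta₂ 0 (w * I))
      ((jacobiTheta₂_fderiv 0 ((u:ℂ) * I)) (0, 1) * I) (u : ℂ) :=
    by have := HasDerivAt.comp (u:ℂ) hC (hasDerivAt_mul_const I); exact this
  have hre := hm.real_of_complex
  have hval : ((jacobiTheta₂_fderiv 0 ((u:ℂ) * I)) (0, 1) * I).re = jThetaD u := by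
    have : (jacobiTheta₂_fderiv 0 ((u:ℂ) * I)) (0, 1) * I
        = (jacobiTheta₂_fderiv 0 ((u:ℂ) * I)) (0, I) := by
      rw [show ((0:ℂ), I) = I • (((0:ℂ), (1:ℂ)) : ℂ × ℂ) by simp, _root_.map_smul, smul_eq_mul, mul_comm]
    rw [this, ← jThetaD_ofReal hu, Complex.ofReal_re]
  rw [hval] at hre
  refine hre.congr_of_eventuallyEq ?_
  filter_upwards [isOpen_Ioi.mem_nhds (show u ∈ Ioi 0 from hu)] with v hv
  rw [← jTheta_ofReal hv, Complex.ofReal_re]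

lemma deriv_jTheta {u : ℝ} (hu : 0 < u) : deriv jTheta u = jThetaD u :=
  (hasDerivAt_jTheta hu).deriv

lemma jTheta_eq_evenKernel {u : ℝ} (hu : 0 < u) : jTheta u = HurwitzZeta.evenKernel 0 u := by
  have h := HurwitzZeta.hasSum_int_evenKernel (0:ℝ) hu
  simp only [add_zero, QuotientAddGroup.mk_zero] at h
  exact (hasSum_jTheta hu).unique h

lemma jTheta_funEq {x : ℝ} (hx : 0 < x) : jTheta x = x ^ (-(1/2) : ℝ) * jTheta x⁻¹ := by
  rw [jTheta_eq_evenKernel hx, jTheta_eq_evenKernel (inv_pos.mpr hx),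
    HurwitzZeta.evenKernel_functional_equation 0 x, ← HurwitzZeta.evenKernel_eq_cosKernel_of_zero,
    Real.rpow_neg hx.le]
  norm_num

lemma jThetaD_eq {v : ℝ} (hv : 0 < v) :
    jThetaD v = -(1/2) * v ^ (-(3/2) : ℝ) * jTheta v⁻¹
      + v ^ (-(1/2) : ℝ) * (jThetaD v⁻¹ * (-(v ^ 2)⁻¹)) := by
  have h1 : HasDerivAt (fun t : ℝ => t ^ (-(1/2) : ℝ)) (-(1/2) * v ^ (-(1/2) - 1 : ℝ)) v :=
    Real.hasDerivAt_rpow_const (Or.inl hv.ne')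
  have h2 : HasDerivAt (fun t : ℝ => jTheta t⁻¹) (jThetaD v⁻¹ * (-(v ^ 2)⁻¹)) v :=
    (hasDerivAt_jTheta (inv_pos.mpr hv)).comp v (hasDerivAt_inv hv.ne')
  have h3 := h1.mul h2
  have h4 : HasDerivAt jTheta
      (-(1/2) * v ^ (-(1/2) - 1 : ℝ) * jTheta v⁻¹
        + v ^ (-(1/2) : ℝ) * (jThetaD v⁻¹ * (-(v ^ 2)⁻¹))) v := by
    refine h3.congr_of_eventuallyEq ?_
    filter_upwards [isOpen_Ioi.mem_nhds (show v ∈ Ioi 0 from hv)] with t ht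
    exact jTheta_funEq ht
  have h5 := (hasDerivAt_jTheta hv).unique h4
  rw [h5, show (-(1/2) - 1 : ℝ) = -(3/2) by norm_num]

lemma jThetaD_inv {x : ℝ} (hx : 0 < x) :
    jThetaD x⁻¹ = -(2⁻¹ * x ^ ((3:ℝ)/2) * jTheta x + x ^ ((5:ℝ)/2) * jThetaD x) := by
  set a := x ^ ((1:ℝ)/2) with ha_def
  have ha : 0 < a := Real.rpow_pos_of_pos hx _
  have hpow : ∀ k : ℕ, x ^ ((k:ℝ)/2) = a ^ k := by
    intro k
    rw [ha_def, ← Real.rpow_natCast (x ^ ((1:ℝ)/2)) k, ← Real.rpow_mul hx.le]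
    congr 1
    ring
  have e1 : jTheta x⁻¹ = a * jTheta x := by
    rw [jTheta_funEq hx, Real.rpow_neg hx.le, show x ^ ((1:ℝ)/2) = a from rfl]
    field_simp
  have hk3 : x ^ ((3:ℝ)/2) = a ^ 3 := by have := hpow 3; norm_num at this ⊢; exact this
  have hk5 : x ^ ((5:ℝ)/2) = a ^ 5 := by have := hpow 5; norm_num at this ⊢; exact this
  have hk1 : x = a ^ 2 := by have := hpow 2; norm_num at this; exact this
  have hk4 : x ^ (2:ℕ) = a ^ 4 := by rw [hk1]; ring
  have e2 := jThetaD_eq hx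
  rw [e1, show (-(3/2):ℝ) = -((3:ℝ)/2) by norm_num, Real.rpow_neg hx.le,
    show (-(1/2):ℝ) = -((1:ℝ)/2) by norm_num, Real.rpow_neg hx.le, hk3, hk4,
    show x ^ ((1:ℝ)/2) = a from rfl] at e2
  field_simp at e2
  have e3 : (2 * a ^ 3) * (jThetaD (1/x) + 2⁻¹ * a ^ 3 * jTheta x + a ^ 5 * jThetaD x) = 0 := by
    linear_combination a ^ 3 * e2
  have e5 : jThetaD (1/x) + 2⁻¹ * a ^ 3 * jTheta x + a ^ 5 * jThetaD x = 0 := by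
    rcases mul_eq_zero.mp e3 with h | h
    · exact absurd h (by positivity)
    · exact h
  rw [hk3, hk5, ← one_div]
  linarith [e5]

lemma one_le_sq_ne {n : ℤ} (hn : n ≠ 0) : (1:ℝ) ≤ (n:ℝ) ^ 2 := by
  have : (1:ℤ) ≤ n ^ 2 := by
    rcases lt_or_gt_of_ne hn with h | h <;> nlinarith
  exact_mod_cast this

lemma exp_term_le {u : ℝ} (hu : 1 ≤ u) {n : ℤ} (hn : n ≠ 0) :
    Real.exp (-Real.pi * (n:ℝ)^2 * u)
      ≤ Real.exp (-Real.pi * (n:ℝ)^2 * 1) * (Real.exp Real.pi * Real.exp (-Real.pi * u)) := by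
  rw [← Real.exp_add, ← Real.exp_add, Real.exp_le_exp]
  have h1 := one_le_sq_ne hn
  nlinarith [Real.pi_pos, mul_nonneg (mul_nonneg Real.pi_pos.le (sub_nonneg.mpr h1)) (sub_nonneg.mpr hu)]

lemma abs_jThetaD_le :
    ∃ C : ℝ, ∀ u : ℝ, 1 ≤ u → |jThetaD u| ≤ C * Real.exp (-Real.pi * u) := by
  refine ⟨(∑' n : ℤ, Real.pi * (n:ℝ)^2 * Real.exp (-Real.pi * (n:ℝ)^2 * 1)) * Real.exp Real.pi,
    fun u hu => ?_⟩
  have hu0 : (0:ℝ) < u := lt_of_lt_of_le one_pos hu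
  have hS : Summable (fun n : ℤ => Real.pi * (n:ℝ)^2 * Real.exp (-Real.pi * (n:ℝ)^2 * u)) :=
    ((summable_sq_jTheta hu0).mul_left Real.pi).congr fun n => by ring
  have hS1 : Summable (fun n : ℤ =>
      Real.pi * (n:ℝ)^2 * Real.exp (-Real.pi * (n:ℝ)^2 * 1) * (Real.exp Real.pi * Real.exp (-Real.pi * u))) :=
    (((summable_sq_jTheta one_pos).mul_left Real.pi).congr (fun n : ℤ => by ring)).mul_right _
  have h1 : |jThetaD u| ≤ ∑' n : ℤ, Real.pi * (n:ℝ)^2 * Real.exp (-Real.pi * (n:ℝ)^2 * u) := by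
    have h2 := norm_tsum_le_tsum_norm (f := fun n : ℤ =>
        -Real.pi * (n:ℝ)^2 * Real.exp (-Real.pi * (n:ℝ)^2 * u)) ?_
    · refine le_trans h2 (le_of_eq (tsum_congr fun n => ?_))
      rw [Real.norm_eq_abs, abs_mul, abs_mul, abs_neg, _root_.abs_of_nonneg Real.pi_pos.le,
        _root_.abs_of_nonneg (sq_nonneg _), _root_.abs_of_nonneg (Real.exp_pos _).le]
    · refine hS.congr fun n => ?_
      rw [Real.norm_eq_abs, abs_mul, abs_mul, abs_neg, _root_.abs_of_nonneg Real.pi_pos.le,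
        _root_.abs_of_nonneg (sq_nonneg _), _root_.abs_of_nonneg (Real.exp_pos _).le]
  refine h1.trans ?_
  rw [show (∑' n : ℤ, Real.pi * (n:ℝ)^2 * Real.exp (-Real.pi * (n:ℝ)^2 * 1)) * Real.exp Real.pi
        * Real.exp (-Real.pi * u)
      = (∑' n : ℤ, Real.pi * (n:ℝ)^2 * Real.exp (-Real.pi * (n:ℝ)^2 * 1))
        * (Real.exp Real.pi * Real.exp (-Real.pi * u)) by ring,
    ← tsum_mul_right]
  refine Summable.tsum_le_tsum (fun n => ?_) hS hS1
  rcases eq_or_ne n 0 with rfl | hn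
  · simp
  · have := exp_term_le hu hn
    have hp : (0:ℝ) ≤ Real.pi * (n:ℝ)^2 := by positivity
    nlinarith [Real.exp_pos (-Real.pi * (n:ℝ)^2 * u), Real.exp_pos (-Real.pi * (n:ℝ)^2 * 1),
      Real.exp_pos Real.pi, Real.exp_pos (-Real.pi * u)]

lemma abs_jTheta_sub_one_le :
    ∃ C : ℝ, ∀ u : ℝ, 1 ≤ u → |jTheta u - 1| ≤ C * Real.exp (-Real.pi * u) := by
  refine ⟨(∑' n : ℤ, Real.exp (-Real.pi * (n:ℝ)^2 * 1)) * Real.exp Real.pi, fun u hu => ?_⟩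
  have hu0 : (0:ℝ) < u := lt_of_lt_of_le one_pos hu
  have h0 : HasSum (fun n : ℤ => if n = 0 then (1:ℝ) else 0) 1 := hasSum_ite_eq 0 1
  have h := (hasSum_jTheta hu0).sub h0
  have hg : (fun n : ℤ => Real.exp (-Real.pi * (n:ℝ)^2 * u) - if n = 0 then (1:ℝ) else 0)
      = fun n : ℤ => if n = 0 then 0 else Real.exp (-Real.pi * (n:ℝ)^2 * u) := by
    funext n
    rcases eq_or_ne n 0 with rfl | hn
    · simp
    · simp [hn]
  rw [hg] at h
  have hSg : Summable (fun n : ℤ => if n = 0 then 0 else Real.exp (-Real.pi * (n:ℝ)^2 * u)) :=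
    h.summable
  have hS1 : Summable (fun n : ℤ =>
      Real.exp (-Real.pi * (n:ℝ)^2 * 1) * (Real.exp Real.pi * Real.exp (-Real.pi * u))) :=
    (summable_jTheta one_pos).mul_right _
  have h1 : |jTheta u - 1| ≤ ∑' n : ℤ, (if n = 0 then 0 else Real.exp (-Real.pi * (n:ℝ)^2 * u)) := by
    rw [← h.tsum_eq]
    refine (norm_tsum_le_tsum_norm (f := fun n : ℤ =>
      if n = 0 then 0 else Real.exp (-Real.pi * (n:ℝ)^2 * u)) ?_).trans
      (le_of_eq (tsum_congr fun n => ?_))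
    · refine hSg.congr fun n => ?_
      rcases eq_or_ne n 0 with rfl | hn
      · simp
      · simp [hn, Real.norm_eq_abs, _root_.abs_of_nonneg (Real.exp_pos _).le]
    · rcases eq_or_ne n 0 with rfl | hn
      · simp
      · simp [hn, Real.norm_eq_abs, _root_.abs_of_nonneg (Real.exp_pos _).le]
  refine h1.trans ?_
  rw [mul_assoc, ← tsum_mul_right]
  refine Summable.tsum_le_tsum (fun n => ?_) hSg hS1
  rcases eq_or_ne n 0 with rfl | hn
  · simp only [if_pos rfl]
    positivity
  · rw [if_neg hn]
    exact exp_term_le hu hn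

lemma abs_jTheta_le :
    ∃ C : ℝ, ∀ u : ℝ, 1 ≤ u → |jTheta u| ≤ C := by
  refine ⟨jTheta 1, fun u hu => ?_⟩
  have hu0 : (0:ℝ) < u := lt_of_lt_of_le one_pos hu
  have hnn : 0 ≤ jTheta u := tsum_nonneg fun n => (Real.exp_pos _).le
  rw [_root_.abs_of_nonneg hnn]
  refine Summable.tsum_le_tsum (fun n => ?_) (summable_jTheta hu0) (summable_jTheta one_pos)
  rw [Real.exp_le_exp]
  have : (0:ℝ) ≤ Real.pi * (n:ℝ)^2 := by positivity
  nlinarith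

lemma continuousOn_jTheta : ContinuousOn jTheta (Set.Ioi 0) :=
  fun x hx => ((hasDerivAt_jTheta hx).continuousAt).continuousWithinAt

lemma integrableOn_aux {f : ℝ → ℝ}
    (hm : AEStronglyMeasurable f (volume.restrict (Set.Ioi 1))) {C : ℝ}
    (hb : ∀ u : ℝ, 1 < u → |f u| ≤ C * Real.exp (-Real.pi * u)) (a : ℝ) :
    IntegrableOn (fun u => u ^ a * f u) (Set.Ioi 1) := by
  have h1 : IntegrableOn (fun u : ℝ => u ^ |a| * Real.exp (-Real.pi * u ^ (1:ℝ))) (Set.Ioi 0) :=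
    integrableOn_rpow_mul_exp_neg_mul_rpow
      (lt_of_lt_of_le neg_one_lt_zero (abs_nonneg a)) one_pos Real.pi_pos
  simp only [Real.rpow_one] at h1
  have h0 : IntegrableOn (fun u : ℝ => C * (u ^ |a| * Real.exp (-Real.pi * u))) (Set.Ioi 1) :=
    (h1.mono_set (Set.Ioi_subset_Ioi zero_le_one)).const_mul C
  refine Integrable.mono' h0 ?_ ?_
  · refine AEStronglyMeasurable.mul ?_ hm
    refine ContinuousOn.aestronglyMeasurable ?_ measurableSet_Ioi
    exact fun x hx => (Real.continuousAt_rpow_const x a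
      (Or.inl (ne_of_gt (lt_trans one_pos hx)))).continuousWithinAt
  · filter_upwards [ae_restrict_mem measurableSet_Ioi] with u hu
    have hu1 : (1:ℝ) < u := hu
    have hu0 : (0:ℝ) < u := lt_trans one_pos hu1
    have hra : (0:ℝ) ≤ u ^ a := (Real.rpow_pos_of_pos hu0 a).le
    have hCe : 0 ≤ C * Real.exp (-Real.pi * u) := le_trans (abs_nonneg _) (hb u hu1)
    calc ‖u ^ a * f u‖ = u ^ a * |f u| := by
          rw [Real.norm_eq_abs, abs_mul, _root_.abs_of_nonneg hra]
      _ ≤ u ^ a * (C * Real.exp (-Real.pi * u)) := by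
          exact mul_le_mul_of_nonneg_left (hb u hu1) hra
      _ ≤ u ^ |a| * (C * Real.exp (-Real.pi * u)) := by
          refine mul_le_mul_of_nonneg_right ?_ hCe
          exact Real.rpow_le_rpow_of_exponent_le hu1.le (le_abs_self a)
      _ = C * (u ^ |a| * Real.exp (-Real.pi * u)) := by ring

lemma inv_image_Ioi : (fun x : ℝ => x⁻¹) '' Set.Ioi 1 = Set.Ioo 0 1 := by
  ext y
  constructor
  · rintro ⟨x, hx, rfl⟩
    have hx1 : (1:ℝ) < x := hx
    have hx0 : (0:ℝ) < x := lt_trans one_pos hx1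
    exact ⟨inv_pos.mpr hx0, by rw [inv_lt_one_iff₀]; exact Or.inr hx1⟩
  · rintro ⟨h0, h1⟩
    refine ⟨y⁻¹, ?_, inv_inv y⟩
    rw [Set.mem_Ioi, lt_inv_comm₀ one_pos h0]
    simpa using h1

lemma key_id (s : ℝ) {x : ℝ} (hx : 1 < x) :
    |(-(x ^ 2)⁻¹)| • ((x⁻¹) ^ (s / 2 + 1) * (deriv jTheta x⁻¹) ^ 2)
      = 1 / 4 * (x ^ (-s / 2) * (jTheta x) ^ 2)
        + x ^ (-s / 2 + 1) * (jTheta x * deriv jTheta x)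
        + x ^ (-s / 2 + 2) * (deriv jTheta x) ^ 2 := by
  have hx0 : (0:ℝ) < x := lt_trans one_pos hx
  have hxinv : (0:ℝ) < x⁻¹ := inv_pos.mpr hx0
  have hA : (x ^ 2)⁻¹ * x ^ (-(s / 2 + 1)) * (x ^ ((3:ℝ)/2) * x ^ ((3:ℝ)/2)) = x ^ (-s / 2) := by
    rw [← Real.rpow_natCast x 2, ← Real.rpow_neg hx0.le, ← Real.rpow_add hx0,
      ← Real.rpow_add hx0, ← Real.rpow_add hx0]
    congr 1
    push_cast
    ring
  have hB : (x ^ 2)⁻¹ * x ^ (-(s / 2 + 1)) * (x ^ ((3:ℝ)/2) * x ^ ((5:ℝ)/2)) = x ^ (-s / 2 + 1) := by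
    rw [← Real.rpow_natCast x 2, ← Real.rpow_neg hx0.le, ← Real.rpow_add hx0,
      ← Real.rpow_add hx0, ← Real.rpow_add hx0]
    congr 1
    push_cast
    ring
  have hC : (x ^ 2)⁻¹ * x ^ (-(s / 2 + 1)) * (x ^ ((5:ℝ)/2) * x ^ ((5:ℝ)/2)) = x ^ (-s / 2 + 2) := by
    rw [← Real.rpow_natCast x 2, ← Real.rpow_neg hx0.le, ← Real.rpow_add hx0,
      ← Real.rpow_add hx0, ← Real.rpow_add hx0]
    congr 1
    push_cast
    ring
  rw [smul_eq_mul, abs_neg, abs_inv, _root_.abs_of_nonneg (by positivity : (0:ℝ) ≤ x ^ 2),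
    deriv_jTheta hxinv, deriv_jTheta hx0, jThetaD_inv hx0,
    Real.inv_rpow hx0.le, ← Real.rpow_neg hx0.le]
  linear_combination ((jTheta x) ^ 2 / 4) * hA + (jTheta x * jThetaD x) * hB
    + ((jThetaD x) ^ 2) * hC

/-- For every real `s > 2`,
`∫₀^∞ u^{s/2+1} θ'(u)² du = 1/(2(s-2)) + ∫₁^∞ u^{s/2+1} θ'(u)² du
  + ∫₁^∞ u^{-s/2+1} θ(u)θ'(u) du + ∫₁^∞ u^{-s/2+2} θ'(u)² du
  + (1/4)∫₁^∞ u^{-s/2}(θ(u)²-1) du`. -/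
theorem I2_split (s : ℝ) (hs : 2 < s) :
    (∫ u in Set.Ioi (0 : ℝ), u ^ (s / 2 + 1) * (deriv jTheta u) ^ 2)
      = 1 / (2 * (s - 2))
        + (∫ u in Set.Ioi (1 : ℝ), u ^ (s / 2 + 1) * (deriv jTheta u) ^ 2)
        + (∫ u in Set.Ioi (1 : ℝ), u ^ (-s / 2 + 1) * (jTheta u * deriv jTheta u))
        + (∫ u in Set.Ioi (1 : ℝ), u ^ (-s / 2 + 2) * (deriv jTheta u) ^ 2)
        + (1 / 4) * ∫ u in Set.Ioi (1 : ℝ), u ^ (-s / 2) * ((jTheta u) ^ 2 - 1) := by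
  obtain ⟨Cd, hCd⟩ := abs_jThetaD_le
  obtain ⟨C1, hC1⟩ := abs_jTheta_sub_one_le
  obtain ⟨C0, hC0⟩ := abs_jTheta_le
  have hC0nn : 0 ≤ C0 := le_trans (abs_nonneg _) (hC0 1 le_rfl)
  -- bounds
  have hbD2 : ∀ u : ℝ, 1 < u → |(deriv jTheta u) ^ 2| ≤ Cd ^ 2 * Real.exp (-Real.pi * u) := by
    intro u hu
    have hu0 : (0:ℝ) < u := lt_trans one_pos hu
    rw [deriv_jTheta hu0]
    have h := hCd u hu.le
    have he1 : Real.exp (-Real.pi * u) ≤ 1 := by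
      rw [Real.exp_le_one_iff]
      nlinarith [Real.pi_pos]
    have he0 : 0 < Real.exp (-Real.pi * u) := Real.exp_pos _
    have habs : |jThetaD u ^ 2| = |jThetaD u| * |jThetaD u| := by
      rw [sq, abs_mul]
    rw [habs]
    nlinarith [abs_nonneg (jThetaD u)]
  have hbθD : ∀ u : ℝ, 1 < u → |jTheta u * deriv jTheta u| ≤ C0 * Cd * Real.exp (-Real.pi * u) := by
    intro u hu
    have hu0 : (0:ℝ) < u := lt_trans one_pos hu
    rw [deriv_jTheta hu0, abs_mul]
    have h1 := hC0 u hu.le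
    have h2 := hCd u hu.le
    have he0 : 0 < Real.exp (-Real.pi * u) := Real.exp_pos _
    nlinarith [abs_nonneg (jTheta u), abs_nonneg (jThetaD u)]
  have hbθ2 : ∀ u : ℝ, 1 < u → |(jTheta u) ^ 2 - 1| ≤ C1 * (C0 + 1) * Real.exp (-Real.pi * u) := by
    intro u hu
    have h1 := hC0 u hu.le
    have h2 := hC1 u hu.le
    have he0 : 0 < Real.exp (-Real.pi * u) := Real.exp_pos _
    have hf : (jTheta u) ^ 2 - 1 = (jTheta u - 1) * (jTheta u + 1) := by ring
    rw [hf, abs_mul]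
    have h3 : |jTheta u + 1| ≤ C0 + 1 := by
      calc |jTheta u + 1| ≤ |jTheta u| + 1 := by
            simpa using abs_add_le (jTheta u) 1
        _ ≤ C0 + 1 := by linarith
    nlinarith [abs_nonneg (jTheta u - 1), abs_nonneg (jTheta u + 1)]
  -- measurability
  have hmD2 : AEStronglyMeasurable (fun u : ℝ => (deriv jTheta u) ^ 2)
      (volume.restrict (Set.Ioi 1)) :=
    (((measurable_deriv jTheta).pow_const 2).aestronglyMeasurable).restrict
  have hmθ : AEStronglyMeasurable jTheta (volume.restrict (Set.Ioi 1)) :=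
    (continuousOn_jTheta.mono (Set.Ioi_subset_Ioi zero_le_one)).aestronglyMeasurable
      measurableSet_Ioi
  have hmθD : AEStronglyMeasurable (fun u : ℝ => jTheta u * deriv jTheta u)
      (volume.restrict (Set.Ioi 1)) :=
    hmθ.mul ((measurable_deriv jTheta).aestronglyMeasurable).restrict
  have hmθ2 : AEStronglyMeasurable (fun u : ℝ => (jTheta u) ^ 2 - 1)
      (volume.restrict (Set.Ioi 1)) :=
    ((hmθ.mul hmθ).congr (Filter.Eventually.of_forall fun u => by
      rw [Pi.mul_apply, sq])).sub aestronglyMeasurable_const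
  -- integrability on Ioi 1
  have hI1 : IntegrableOn (fun u : ℝ => u ^ (s / 2 + 1) * (deriv jTheta u) ^ 2) (Set.Ioi 1) :=
    integrableOn_aux hmD2 hbD2 _
  have hIθD : IntegrableOn (fun u : ℝ => u ^ (-s / 2 + 1) * (jTheta u * deriv jTheta u))
      (Set.Ioi 1) := integrableOn_aux hmθD hbθD _
  have hID2 : IntegrableOn (fun u : ℝ => u ^ (-s / 2 + 2) * (deriv jTheta u) ^ 2) (Set.Ioi 1) :=
    integrableOn_aux hmD2 hbD2 _
  have hIθ2 : IntegrableOn (fun u : ℝ => u ^ (-s / 2) * ((jTheta u) ^ 2 - 1)) (Set.Ioi 1) :=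
    integrableOn_aux hmθ2 hbθ2 _
  have hIr : IntegrableOn (fun u : ℝ => u ^ (-s / 2)) (Set.Ioi 1) :=
    integrableOn_Ioi_rpow_of_lt (by linarith) one_pos
  have hIθθ : IntegrableOn (fun u : ℝ => u ^ (-s / 2) * (jTheta u) ^ 2) (Set.Ioi 1) := by
    have h : IntegrableOn
        (fun u : ℝ => u ^ (-s / 2) * ((jTheta u) ^ 2 - 1) + u ^ (-s / 2)) (Set.Ioi 1) :=
      hIθ2.add hIr
    exact h.congr_fun (fun u _ => by ring) measurableSet_Ioi
  have hI12 : IntegrableOn (fun x : ℝ => 1 / 4 * (x ^ (-s / 2) * (jTheta x) ^ 2)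
      + x ^ (-s / 2 + 1) * (jTheta x * deriv jTheta x)) (Set.Ioi 1) :=
    (hIθθ.const_mul (1/4)).add hIθD
  have hG : IntegrableOn (fun x : ℝ => 1 / 4 * (x ^ (-s / 2) * (jTheta x) ^ 2)
      + x ^ (-s / 2 + 1) * (jTheta x * deriv jTheta x)
      + x ^ (-s / 2 + 2) * (deriv jTheta x) ^ 2) (Set.Ioi 1) :=
    hI12.add hID2
  -- change of variables
  have hder : ∀ x ∈ Set.Ioi (1:ℝ),
      HasDerivWithinAt (fun x : ℝ => x⁻¹) (-(x ^ 2)⁻¹) (Set.Ioi 1) x :=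
    fun x hx => (hasDerivAt_inv (ne_of_gt (lt_trans one_pos hx))).hasDerivWithinAt
  have hinj : Set.InjOn (fun x : ℝ => x⁻¹) (Set.Ioi 1) := fun a _ b _ h => inv_injective h
  have hcongr : ∀ x ∈ Set.Ioi (1:ℝ),
      |(-(x ^ 2)⁻¹)| • ((fun u : ℝ => u ^ (s / 2 + 1) * (deriv jTheta u) ^ 2) x⁻¹)
        = 1 / 4 * (x ^ (-s / 2) * (jTheta x) ^ 2)
          + x ^ (-s / 2 + 1) * (jTheta x * deriv jTheta x)
          + x ^ (-s / 2 + 2) * (deriv jTheta x) ^ 2 := fun x hx => key_id s hx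
  have hIoo : IntegrableOn (fun u : ℝ => u ^ (s / 2 + 1) * (deriv jTheta u) ^ 2)
      (Set.Ioo 0 1) := by
    rw [← inv_image_Ioi]
    rw [MeasureTheory.integrableOn_image_iff_integrableOn_abs_deriv_smul
      measurableSet_Ioi hder hinj]
    exact (hG.congr_fun (fun x hx => (hcongr x hx).symm) measurableSet_Ioi)
  have hCOV : (∫ u in Set.Ioo (0:ℝ) 1, u ^ (s / 2 + 1) * (deriv jTheta u) ^ 2)
      = ∫ x in Set.Ioi (1:ℝ), (1 / 4 * (x ^ (-s / 2) * (jTheta x) ^ 2)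
          + x ^ (-s / 2 + 1) * (jTheta x * deriv jTheta x)
          + x ^ (-s / 2 + 2) * (deriv jTheta x) ^ 2) := by
    rw [← inv_image_Ioi, MeasureTheory.integral_image_eq_integral_abs_deriv_smul
      measurableSet_Ioi hder hinj]
    exact setIntegral_congr_fun measurableSet_Ioi hcongr
  -- split the θ² integral
  have hsplitθ : (∫ x in Set.Ioi (1:ℝ), x ^ (-s / 2) * (jTheta x) ^ 2)
      = (∫ x in Set.Ioi (1:ℝ), x ^ (-s / 2) * ((jTheta x) ^ 2 - 1))
        + ∫ x in Set.Ioi (1:ℝ), x ^ (-s / 2) := by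
    rw [← integral_add hIθ2 hIr]
    exact setIntegral_congr_fun measurableSet_Ioi fun x _ => by ring
  have hrval : (∫ x in Set.Ioi (1:ℝ), x ^ (-s / 2)) = 2 / (s - 2) := by
    rw [integral_Ioi_rpow_of_lt (by linarith) one_pos]
    rw [Real.one_rpow]
    rw [show (-s / 2 + 1) = -((s - 2)/2) by ring, div_neg, neg_div, neg_neg, one_div_div]
  -- split integral over Ioi 0
  have hsplit : (∫ u in Set.Ioi (0 : ℝ), u ^ (s / 2 + 1) * (deriv jTheta u) ^ 2)
      = (∫ u in Set.Ioo (0:ℝ) 1, u ^ (s / 2 + 1) * (deriv jTheta u) ^ 2)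
        + ∫ u in Set.Ioi (1:ℝ), u ^ (s / 2 + 1) * (deriv jTheta u) ^ 2 := by
    rw [← Set.Ioc_union_Ioi_eq_Ioi (zero_le_one (α := ℝ)),
      MeasureTheory.setIntegral_union (Set.Ioc_disjoint_Ioi le_rfl) measurableSet_Ioi
        (hIoo.congr_set_ae MeasureTheory.Ioo_ae_eq_Ioc.symm) hI1,
      MeasureTheory.integral_Ioc_eq_integral_Ioo]
  -- sum of the three pieces
  have hsum : (∫ x in Set.Ioi (1:ℝ), (1 / 4 * (x ^ (-s / 2) * (jTheta x) ^ 2)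
          + x ^ (-s / 2 + 1) * (jTheta x * deriv jTheta x)
          + x ^ (-s / 2 + 2) * (deriv jTheta x) ^ 2))
      = 1 / 4 * (∫ x in Set.Ioi (1:ℝ), x ^ (-s / 2) * (jTheta x) ^ 2)
        + (∫ x in Set.Ioi (1:ℝ), x ^ (-s / 2 + 1) * (jTheta x * deriv jTheta x))
        + ∫ x in Set.Ioi (1:ℝ), x ^ (-s / 2 + 2) * (deriv jTheta x) ^ 2 := by
    rw [integral_add hI12 hID2, integral_add (hIθθ.const_mul (1/4)) hIθD, integral_const_mul]
  have harith : 1 / (2 * (s - 2)) = 1 / 4 * (2 / (s - 2)) := by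
    have h2 : s - 2 ≠ 0 := by linarith
    field_simp
    ring
  rw [hsplit, hCOV, hsum, hsplitθ, hrval]
  linarith [harith]
end
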